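/- arXiv:2305.01008 — 5 statements merged into one kernel-verified Lean document; each statement's English description precedes it below -/
import Mathlib

section
/- A function g from admissible sets on [n] to the integers is the rank function g_D of some delta-matroid D on [n] if and only if: (1) g(∅,∅) = 0 (normalization); (2) |g(S)| ≤ 1 whenever |S| = 1 (boundedness); (3) g(S) + g(T) ≥ g(S ⊓ T) + g(S ⊔ T) for all admissible S, T (bisubmodularity); and (4) g(S) ≡ |S| (mod 2) for all admissible S (parity). -/
open Finset
open scoped symmDiff

/-- The rank-type function of a nonempty family `G` of subsets of `Fin n`, evaluated on an
admissible set `(Sp, Sn)`: `max_{F ∈ G} (|Sp ∩ F| + |Sn \ F| − |Sn ∩ F| − |Sp \ F|)`.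
(Junk value `0` when the family is empty.) -/
noncomputable def gFam {n : ℕ} (G : Finset (Finset (Fin n))) (Sp Sn : Finset (Fin n)) : ℤ :=
  if h : G.Nonempty then
    G.sup' h fun F => ((Sp ∩ F).card : ℤ) + ((Sn \ F).card : ℤ)
      - ((Sn ∩ F).card : ℤ) - ((Sp \ F).card : ℤ)
  else 0

/-- A delta-matroid on `[n]`: a nonempty family of subsets of `Fin n` (each `F` encoding the
size-`n` admissible set `(F, [n] \ F)`), satisfying the symmetric exchange axiom. -/
structure DeltaMatroid (n : ℕ) where
  feas : Finset (Finset (Fin n))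
  nonempty : feas.Nonempty
  exchange : ∀ F₁ ∈ feas, ∀ F₂ ∈ feas, ∀ x ∈ F₁ ∆ F₂, ∃ y ∈ F₁ ∆ F₂, F₁ ∆ {x, y} ∈ feas

/-- The rank function `g_D` of a delta-matroid, on admissible sets `(Sp, Sn)`. -/
noncomputable def DeltaMatroid.g {n : ℕ} (D : DeltaMatroid n) :
    Finset (Fin n) → Finset (Fin n) → ℤ :=
  gFam D.feas


namespace DMaux
variable {n : ℕ}

def chi (F : Finset (Fin n)) (a : Fin n) : ℤ := if a ∈ F then 1 else -1

def w (Sp Sn : Finset (Fin n)) (a : Fin n) : ℤ :=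
  (if a ∈ Sp then 1 else 0) - (if a ∈ Sn then 1 else 0)

def sig (F Sp Sn : Finset (Fin n)) : ℤ := ∑ a : Fin n, w Sp Sn a * chi F a

lemma cardz (s : Finset (Fin n)) : (s.card : ℤ) = ∑ a, if a ∈ s then (1:ℤ) else 0 := by
  rw [Finset.sum_ite_mem, univ_inter]; simp

lemma sig_eq (F Sp Sn : Finset (Fin n)) :
    ((Sp ∩ F).card : ℤ) + ((Sn \ F).card : ℤ) - ((Sn ∩ F).card : ℤ) - ((Sp \ F).card : ℤ)
      = sig F Sp Sn := by
  rw [sig, cardz, cardz, cardz, cardz, ← Finset.sum_add_distrib, ← Finset.sum_sub_distrib,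
    ← Finset.sum_sub_distrib]
  refine Finset.sum_congr rfl fun a _ => ?_
  simp only [mem_inter, mem_sdiff, w, chi]
  by_cases h1 : a ∈ Sp <;> by_cases h2 : a ∈ Sn <;> by_cases h3 : a ∈ F <;> simp [h1, h2, h3]

lemma gFam_eq (G : Finset (Finset (Fin n))) (h : G.Nonempty) (Sp Sn : Finset (Fin n)) :
    gFam G Sp Sn = G.sup' h fun F => sig F Sp Sn := by
  rw [gFam, dif_pos h]
  exact Finset.sup'_congr h rfl fun F _ => sig_eq F Sp Sn

lemma chi_cases (F : Finset (Fin n)) (a : Fin n) : chi F a = 1 ∨ chi F a = -1 := by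
  rw [chi]; by_cases h : a ∈ F <;> simp [h]

lemma w_cases (Sp Sn : Finset (Fin n)) (a : Fin n) :
    w Sp Sn a = 1 ∨ w Sp Sn a = 0 ∨ w Sp Sn a = -1 := by
  rw [w]; by_cases h1 : a ∈ Sp <;> by_cases h2 : a ∈ Sn <;> simp [h1, h2]

lemma abs_sig_le (F Sp Sn : Finset (Fin n)) :
    |sig F Sp Sn| ≤ (Sp.card : ℤ) + (Sn.card : ℤ) := by
  calc |sig F Sp Sn| ≤ ∑ a : Fin n, |w Sp Sn a * chi F a| := Finset.abs_sum_le_sum_abs _ _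
    _ ≤ ∑ a : Fin n, ((if a ∈ Sp then (1:ℤ) else 0) + (if a ∈ Sn then (1:ℤ) else 0)) := by
        refine Finset.sum_le_sum fun a _ => ?_
        rcases w_cases Sp Sn a with h | h | h <;> rcases chi_cases F a with h' | h' <;>
          · rw [h, h']
            simp only [w] at h
            by_cases h1 : a ∈ Sp <;> by_cases h2 : a ∈ Sn <;> simp [h1, h2] at h ⊢
    _ = (Sp.card : ℤ) + (Sn.card : ℤ) := by rw [Finset.sum_add_distrib, ← cardz, ← cardz]

lemma sig_parity (F Sp Sn : Finset (Fin n)) :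
    (2:ℤ) ∣ sig F Sp Sn - ((Sp.card : ℤ) + (Sn.card : ℤ)) := by
  rw [sig, cardz, cardz, ← Finset.sum_add_distrib, ← Finset.sum_sub_distrib]
  refine Finset.dvd_sum fun a _ => ?_
  simp only [w, chi]
  by_cases h1 : a ∈ Sp <;> by_cases h2 : a ∈ Sn <;> by_cases h3 : a ∈ F <;>
    simp [h1, h2, h3] <;> decide

lemma sig_modular (F Sp Sn Tp Tn : Finset (Fin n)) (hS : Disjoint Sp Sn) (hT : Disjoint Tp Tn) :
    sig F (Sp ∩ Tp) (Sn ∩ Tn) + sig F ((Sp ∪ Tp) \ (Sn ∪ Tn)) ((Sn ∪ Tn) \ (Sp ∪ Tp))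
      = sig F Sp Sn + sig F Tp Tn := by
  rw [sig, sig, sig, sig, ← Finset.sum_add_distrib, ← Finset.sum_add_distrib]
  refine Finset.sum_congr rfl fun a _ => ?_
  rw [← add_mul, ← add_mul]
  congr 1
  simp only [w, mem_inter, mem_sdiff, mem_union]
  have h1 : a ∈ Sp → a ∉ Sn := fun h => disjoint_left.1 hS h
  have h2 : a ∈ Tp → a ∉ Tn := fun h => disjoint_left.1 hT h
  by_cases hsp : a ∈ Sp <;> by_cases hsn : a ∈ Sn <;> by_cases htp : a ∈ Tp <;>
    by_cases htn : a ∈ Tn <;> simp [hsp, hsn, htp, htn] at h1 h2 ⊢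

lemma sig_insert_p (F Sp Sn : Finset (Fin n)) (y : Fin n) (hy : y ∉ Sp) :
    sig F (insert y Sp) Sn = sig F Sp Sn + chi F y := by
  rw [sig, sig]
  have : ∀ a : Fin n, w (insert y Sp) Sn a * chi F a
      = w Sp Sn a * chi F a + (if a = y then chi F y else 0) := by
    intro a
    by_cases h : a = y
    · subst h; by_cases h2 : a ∈ Sn <;> simp [w, hy, mem_insert, h2] <;> ring
    · simp [w, mem_insert, h]
  rw [Finset.sum_congr rfl fun a _ => this a, Finset.sum_add_distrib]
  simp

lemma sig_insert_n (F Sp Sn : Finset (Fin n)) (y : Fin n) (hy : y ∉ Sn) :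
    sig F Sp (insert y Sn) = sig F Sp Sn - chi F y := by
  rw [sig, sig]
  have : ∀ a : Fin n, w Sp (insert y Sn) a * chi F a
      = w Sp Sn a * chi F a - (if a = y then chi F y else 0) := by
    intro a
    by_cases h : a = y
    · subst h; by_cases h2 : a ∈ Sp <;> simp [w, hy, mem_insert, h2] <;> ring
    · simp [w, mem_insert, h]
  rw [Finset.sum_congr rfl fun a _ => this a, Finset.sum_sub_distrib]
  simp

lemma sig_full (F A : Finset (Fin n)) :
    sig F A (univ \ A) = (n : ℤ) - 2 * ((A ∆ F).card : ℤ) := by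
  rw [sig, cardz]
  have : ∀ a : Fin n, w A (univ \ A) a * chi F a
      = 1 - 2 * (if a ∈ A ∆ F then (1:ℤ) else 0) := by
    intro a
    have hm : a ∈ A ∆ F ↔ (a ∈ A ∧ a ∉ F ∨ a ∈ F ∧ a ∉ A) := Finset.mem_symmDiff
    simp only [w, chi, mem_sdiff, mem_univ, true_and]
    by_cases h1 : a ∈ A <;> by_cases h2 : a ∈ F <;> simp [h1, h2, hm]
  rw [Finset.sum_congr rfl fun a _ => this a, Finset.sum_sub_distrib, ← Finset.mul_sum]
  simp [Finset.card_univ]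


lemma wchi_bound (F Sp Sn : Finset (Fin n)) (a : Fin n) :
    -1 ≤ w Sp Sn a * chi F a ∧ w Sp Sn a * chi F a ≤ 1 := by
  rcases w_cases Sp Sn a with h | h | h <;> rcases chi_cases F a with h' | h' <;>
    rw [h, h'] <;> norm_num

lemma chi_symmDiff (F B : Finset (Fin n)) (a : Fin n) (ha : a ∈ B) :
    chi (F ∆ B) a = - chi F a := by
  have : a ∈ F ∆ B ↔ ¬ a ∈ F := by
    rw [Finset.mem_symmDiff]; tauto
  rw [chi, chi]
  by_cases h : a ∈ F <;> simp [this, h]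

lemma chi_symmDiff_not (F B : Finset (Fin n)) (a : Fin n) (ha : a ∉ B) :
    chi (F ∆ B) a = chi F a := by
  have : a ∈ F ∆ B ↔ a ∈ F := by
    rw [Finset.mem_symmDiff]; tauto
  rw [chi, chi]
  by_cases h : a ∈ F <;> simp [this, h]

lemma sig_flip (F B Sp Sn : Finset (Fin n)) :
    sig (F ∆ B) Sp Sn = sig F Sp Sn - 2 * ∑ a ∈ B, w Sp Sn a * chi F a := by
  have h1 : ∑ a ∈ B, (w Sp Sn a * chi (F ∆ B) a - w Sp Sn a * chi F a)
      = ∑ a : Fin n, (w Sp Sn a * chi (F ∆ B) a - w Sp Sn a * chi F a) :=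
    Finset.sum_subset (subset_univ B) (fun a _ ha => by rw [chi_symmDiff_not F B a ha]; ring)
  have h2 : ∑ a ∈ B, (w Sp Sn a * chi (F ∆ B) a - w Sp Sn a * chi F a)
      = ∑ a ∈ B, (-2) * (w Sp Sn a * chi F a) :=
    Finset.sum_congr rfl fun a ha => by rw [chi_symmDiff F B a ha]; ring
  rw [Finset.sum_sub_distrib, Finset.sum_sub_distrib] at h1
  rw [Finset.sum_sub_distrib, ← Finset.mul_sum] at h2
  rw [sig, sig]
  linarith

lemma card_symmDiff_lt (A B : Finset (Fin n)) (hB : B.Nonempty) (hBA : B ⊆ A) :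
    (A ∆ B).card < A.card := by
  have h1 : B \ A = ∅ := Finset.sdiff_eq_empty_iff_subset.2 hBA
  have h2 : A ∆ B = A \ B := by
    show A \ B ∪ B \ A = A \ B
    rw [h1, union_empty]
  rw [h2, card_sdiff_of_subset hBA]
  have := Finset.card_pos.2 hB
  have := Finset.card_le_card hBA
  omega

lemma exc_step (D : DeltaMatroid n) {F₁ F₂ : Finset (Fin n)} (h₁ : F₁ ∈ D.feas)
    (h₂ : F₂ ∈ D.feas) {x : Fin n} (hx : x ∈ F₁ ∆ F₂) (Up Un : Finset (Fin n))
    (hcond : ∀ y ∈ F₁ ∆ F₂, w Up Un x * chi F₁ x + w Up Un y * chi F₁ y ≤ 0) :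
    ∃ F' ∈ D.feas, (F' ∆ F₂).card < (F₁ ∆ F₂).card ∧ sig F₁ Up Un ≤ sig F' Up Un := by
  obtain ⟨y, hy, hf⟩ := D.exchange F₁ h₁ F₂ h₂ x hx
  refine ⟨F₁ ∆ {x, y}, hf, ?_, ?_⟩
  · have he : (F₁ ∆ {x, y}) ∆ F₂ = (F₁ ∆ F₂) ∆ {x, y} := by
      rw [symmDiff_assoc, symmDiff_assoc, symmDiff_comm ({x,y} : Finset (Fin n)) F₂]
    rw [he]
    refine card_symmDiff_lt _ _ ⟨x, mem_insert_self x {y}⟩ ?_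
    intro a ha
    rcases mem_insert.1 ha with rfl | ha'
    · exact hx
    · rw [mem_singleton.1 ha']; exact hy
  · rw [sig_flip]
    have hsum : ∑ a ∈ ({x, y} : Finset (Fin n)), w Up Un a * chi F₁ a ≤ 0 := by
      by_cases hxy : x = y
      · subst hxy
        simp only [insert_eq_self.2 (mem_singleton_self x), Finset.sum_singleton]
        have := hcond x hx
        linarith
      · rw [Finset.sum_pair hxy]
        exact hcond y hy
    linarith

lemma w_mono (Sp Sn Tp Tn : Finset (Fin n)) (hS : Disjoint Sp Sn) (hT : Disjoint Tp Tn)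
    (a : Fin n) (ha : w (Sp ∩ Tp) (Sn ∩ Tn) a ≠ 0) :
    w ((Sp ∪ Tp) \ (Sn ∪ Tn)) ((Sn ∪ Tn) \ (Sp ∪ Tp)) a = w (Sp ∩ Tp) (Sn ∩ Tn) a := by
  simp only [w, mem_inter, mem_sdiff, mem_union] at *
  have h1 : a ∈ Sp → a ∉ Sn := fun h => disjoint_left.1 hS h
  have h2 : a ∈ Tp → a ∉ Tn := fun h => disjoint_left.1 hT h
  by_cases hsp : a ∈ Sp <;> by_cases hsn : a ∈ Sn <;> by_cases htp : a ∈ Tp <;>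
    by_cases htn : a ∈ Tn <;> simp [hsp, hsn, htp, htn] at h1 h2 ha ⊢

lemma wchi_pm (F Sp Sn : Finset (Fin n)) (a : Fin n) (h : w Sp Sn a ≠ 0) :
    w Sp Sn a * chi F a = 1 ∨ w Sp Sn a * chi F a = -1 := by
  rcases w_cases Sp Sn a with h1 | h1 | h1 <;> rcases chi_cases F a with h2 | h2 <;>
    rw [h1, h2] <;> norm_num <;> exact h h1

lemma gFam_bisubmod (D : DeltaMatroid n) (Sp Sn Tp Tn : Finset (Fin n))
    (hS : Disjoint Sp Sn) (hT : Disjoint Tp Tn) :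
    gFam D.feas (Sp ∩ Tp) (Sn ∩ Tn)
      + gFam D.feas ((Sp ∪ Tp) \ (Sn ∪ Tn)) ((Sn ∪ Tn) \ (Sp ∪ Tp))
      ≤ gFam D.feas Sp Sn + gFam D.feas Tp Tn := by
  have hne := D.nonempty
  rw [gFam_eq _ hne, gFam_eq _ hne, gFam_eq _ hne, gFam_eq _ hne]
  set Ip := Sp ∩ Tp with hIp
  set In := Sn ∩ Tn with hIn
  set Jp := (Sp ∪ Tp) \ (Sn ∪ Tn) with hJp
  set Jn := (Sn ∪ Tn) \ (Sp ∪ Tp) with hJn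
  set M1 := D.feas.sup' hne fun F => sig F Ip In with hM1
  set M2 := D.feas.sup' hne fun F => sig F Jp Jn with hM2
  set P := (D.feas ×ˢ D.feas).filter
    (fun p => sig p.1 Ip In = M1 ∧ sig p.2 Jp Jn = M2) with hPdef
  obtain ⟨Fa, hFa, ha⟩ := Finset.exists_mem_eq_sup' hne (fun F => sig F Ip In)
  obtain ⟨Fb, hFb, hb⟩ := Finset.exists_mem_eq_sup' hne (fun F => sig F Jp Jn)
  have hPne : P.Nonempty := ⟨(Fa, Fb), by
    rw [hPdef, mem_filter, mem_product]; exact ⟨⟨hFa, hFb⟩, ha.symm, hb.symm⟩⟩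
  obtain ⟨⟨F₁, F₂⟩, hPmem, hmin⟩ := Finset.exists_min_image P (fun p => (p.1 ∆ p.2).card) hPne
  rw [hPdef, mem_filter, mem_product] at hPmem
  obtain ⟨⟨h₁, h₂⟩, e1, e2⟩ := hPmem
  have stepA : ∀ z ∈ F₁ ∆ F₂, w Ip In z = 0 := by
    intro z hz
    by_contra hnz
    have hA1 : w Ip In z * chi F₁ z = 1 := by
      rcases wchi_pm F₁ Ip In z hnz with h | hprod
      · exact h
      obtain ⟨F', hF', hcard, hsig⟩ := exc_step D h₁ h₂ hz Ip In (fun y hy => by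
        have := (wchi_bound F₁ Ip In y).2; rw [hprod]; linarith)
      have heq : sig F' Ip In = M1 :=
        le_antisymm (by rw [hM1]; exact Finset.le_sup' (fun F => sig F Ip In) hF') (e1 ▸ hsig)
      have hm := hmin (F', F₂)
        (by rw [hPdef, mem_filter, mem_product]; exact ⟨⟨hF', h₂⟩, heq, e2⟩)
      have hm' : (F₁ ∆ F₂).card ≤ (F' ∆ F₂).card := hm
      have hcard' : (F' ∆ F₂).card < (F₁ ∆ F₂).card := hcard
      omega
    have hwJ : w Jp Jn z = w Ip In z := w_mono Sp Sn Tp Tn hS hT z hnz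
    have hnzJ : w Jp Jn z ≠ 0 := by rw [hwJ]; exact hnz
    have hA2 : w Jp Jn z * chi F₂ z = 1 := by
      rcases wchi_pm F₂ Jp Jn z hnzJ with h | hprod
      · exact h
      have hz' : z ∈ F₂ ∆ F₁ := by rwa [symmDiff_comm]
      obtain ⟨F', hF', hcard, hsig⟩ := exc_step D h₂ h₁ hz' Jp Jn (fun y hy => by
        have := (wchi_bound F₂ Jp Jn y).2; rw [hprod]; linarith)
      have heq : sig F' Jp Jn = M2 :=
        le_antisymm (by rw [hM2]; exact Finset.le_sup' (fun F => sig F Jp Jn) hF') (e2 ▸ hsig)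
      have hm := hmin (F₁, F')
        (by rw [hPdef, mem_filter, mem_product]; exact ⟨⟨h₁, hF'⟩, e1, heq⟩)
      have hcard2 : (F' ∆ F₁).card < (F₂ ∆ F₁).card := hcard
      have hm' : (F₁ ∆ F₂).card ≤ (F₁ ∆ F').card := hm
      rw [symmDiff_comm F' F₁, symmDiff_comm F₂ F₁] at hcard2
      omega
    have hchi : chi F₂ z = - chi F₁ z := by
      rw [Finset.mem_symmDiff] at hz
      rw [chi, chi]
      rcases hz with ⟨hin, hout⟩ | ⟨hin, hout⟩ <;> simp [hin, hout]
    rw [hwJ, hchi] at hA2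
    nlinarith [hA1, hA2]
  have hFeq : F₁ = F₂ := by
    by_contra hne12
    have hΔ : (F₁ ∆ F₂).Nonempty := by
      rw [Finset.nonempty_iff_ne_empty]
      intro h
      exact hne12 (by rwa [← bot_eq_empty, symmDiff_eq_bot] at h)
    obtain ⟨x, hx⟩ := hΔ
    obtain ⟨F', hF', hcard, hsig⟩ := exc_step D h₁ h₂ hx Ip In (fun y hy => by
      rw [stepA x hx, stepA y hy]; norm_num)
    have heq : sig F' Ip In = M1 :=
      le_antisymm (by rw [hM1]; exact Finset.le_sup' (fun F => sig F Ip In) hF') (e1 ▸ hsig)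
    have hm := hmin (F', F₂)
      (by rw [hPdef, mem_filter, mem_product]; exact ⟨⟨hF', h₂⟩, heq, e2⟩)
    have hm' : (F₁ ∆ F₂).card ≤ (F' ∆ F₂).card := hm
    have hcard' : (F' ∆ F₂).card < (F₁ ∆ F₂).card := hcard
    omega
  subst hFeq
  calc M1 + M2 = sig F₁ Ip In + sig F₁ Jp Jn := by rw [e1, e2]
    _ = sig F₁ Sp Sn + sig F₁ Tp Tn := sig_modular F₁ Sp Sn Tp Tn hS hT
    _ ≤ _ := add_le_add (Finset.le_sup' (fun F => sig F Sp Sn) h₁)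
      (Finset.le_sup' (fun F => sig F Tp Tn) h₁)

structure Ax (n : ℕ) (g : Finset (Fin n) → Finset (Fin n) → ℤ) : Prop where
  zero : g ∅ ∅ = 0
  single : ∀ Sp Sn : Finset (Fin n), Disjoint Sp Sn → Sp.card + Sn.card = 1 → |g Sp Sn| ≤ 1
  bisub : ∀ Sp Sn Tp Tn : Finset (Fin n), Disjoint Sp Sn → Disjoint Tp Tn →
    g (Sp ∩ Tp) (Sn ∩ Tn) + g ((Sp ∪ Tp) \ (Sn ∪ Tn)) ((Sn ∪ Tn) \ (Sp ∪ Tp))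
      ≤ g Sp Sn + g Tp Tn
  parity : ∀ Sp Sn : Finset (Fin n), Disjoint Sp Sn →
    g Sp Sn ≡ ((Sp.card : ℤ) + (Sn.card : ℤ)) [ZMOD 2]

variable {g : Finset (Fin n) → Finset (Fin n) → ℤ} (hA : Ax n g)
include hA

section Steps
variable {Sp Sn : Finset (Fin n)} {x : Fin n}

lemma step_up_p (hS : Disjoint Sp Sn) (hp : x ∉ Sp) (hn : x ∉ Sn) :
    g (insert x Sp) Sn ≤ g Sp Sn + 1 := by
  have hb := hA.bisub Sp Sn {x} ∅ hS (disjoint_empty_right _)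
  have h1 : Sp ∩ {x} = ∅ := Finset.inter_singleton_of_notMem hp
  have h2 : (Sp ∪ {x}) \ (Sn ∪ ∅) = insert x Sp := by
    rw [union_empty]
    ext a
    simp only [mem_sdiff, mem_insert, mem_union, mem_singleton, or_comm]
    constructor
    · tauto
    · rintro (rfl | ha)
      · exact ⟨Or.inl rfl, hn⟩
      · exact ⟨Or.inr ha, disjoint_left.1 hS ha⟩
  have h3 : (Sn ∪ ∅) \ (Sp ∪ {x}) = Sn := by
    rw [union_empty]
    ext a
    simp only [mem_sdiff, mem_union, mem_singleton]
    constructor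
    · tauto
    · intro ha
      exact ⟨ha, by rintro (h | rfl); exact disjoint_right.1 hS ha h; exact hn ha⟩
  rw [h1, inter_empty, h2, h3, hA.zero] at hb
  have hs : |g {x} ∅| ≤ 1 := hA.single {x} ∅ (disjoint_empty_right _) (by simp)
  have := abs_le.1 hs
  linarith

lemma step_up_n (hS : Disjoint Sp Sn) (hp : x ∉ Sp) (hn : x ∉ Sn) :
    g Sp (insert x Sn) ≤ g Sp Sn + 1 := by
  have hb := hA.bisub Sp Sn ∅ {x} hS (disjoint_empty_left _)
  have h1 : Sn ∩ {x} = ∅ := Finset.inter_singleton_of_notMem hn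
  have h2 : (Sp ∪ ∅) \ (Sn ∪ {x}) = Sp := by
    rw [union_empty]
    ext a
    simp only [mem_sdiff, mem_union, mem_singleton]
    constructor
    · tauto
    · intro ha
      exact ⟨ha, by rintro (h | rfl); exact disjoint_left.1 hS ha h; exact hp ha⟩
  have h3 : (Sn ∪ {x}) \ (Sp ∪ ∅) = insert x Sn := by
    rw [union_empty]
    ext a
    simp only [mem_sdiff, mem_insert, mem_union, mem_singleton, or_comm]
    constructor
    · tauto
    · rintro (rfl | ha)
      · exact ⟨Or.inl rfl, hp⟩
      · exact ⟨Or.inr ha, disjoint_right.1 hS ha⟩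
  rw [inter_empty, h1, h2, h3, hA.zero] at hb
  have hs : |g ∅ {x}| ≤ 1 := hA.single ∅ {x} (disjoint_empty_left _) (by simp)
  have := abs_le.1 hs
  linarith

lemma step_down_p (hS : Disjoint Sp Sn) (hp : x ∉ Sp) (hn : x ∉ Sn) :
    g Sp Sn ≤ g (insert x Sp) Sn + 1 := by
  have hd : Disjoint (insert x Sp) Sn := by
    rw [Finset.disjoint_insert_left]; exact ⟨hn, hS⟩
  have hb := hA.bisub (insert x Sp) Sn ∅ {x} hd (disjoint_empty_left _)
  have h1 : (insert x Sp) ∩ ∅ = ∅ := inter_empty _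
  have h2 : Sn ∩ {x} = ∅ := Finset.inter_singleton_of_notMem hn
  have h3 : (insert x Sp ∪ ∅) \ (Sn ∪ {x}) = Sp := by
    rw [union_empty]
    ext a
    simp only [mem_sdiff, mem_union, mem_singleton, mem_insert]
    constructor
    · rintro ⟨rfl | ha, hno⟩
      · exact absurd (Or.inr rfl) hno
      · exact ha
    · intro ha
      refine ⟨Or.inr ha, ?_⟩
      rintro (h | rfl)
      · exact disjoint_left.1 hS ha h
      · exact hp ha
  have h4 : (Sn ∪ {x}) \ (insert x Sp ∪ ∅) = Sn := by
    rw [union_empty]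
    ext a
    simp only [mem_sdiff, mem_union, mem_singleton, mem_insert]
    constructor
    · rintro ⟨ha | rfl, hno⟩
      · exact ha
      · exact absurd (Or.inl rfl) hno
    · intro ha
      refine ⟨Or.inl ha, ?_⟩
      rintro (rfl | h)
      · exact hn ha
      · exact disjoint_right.1 hS ha h
  rw [h1, h2, h3, h4, hA.zero] at hb
  have hs : |g ∅ {x}| ≤ 1 := hA.single ∅ {x} (disjoint_empty_left _) (by simp)
  have := abs_le.1 hs
  linarith

lemma step_down_n (hS : Disjoint Sp Sn) (hp : x ∉ Sp) (hn : x ∉ Sn) :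
    g Sp Sn ≤ g Sp (insert x Sn) + 1 := by
  have hd : Disjoint Sp (insert x Sn) := by
    rw [Finset.disjoint_insert_right]; exact ⟨hp, hS⟩
  have hb := hA.bisub Sp (insert x Sn) {x} ∅ hd (disjoint_empty_right _)
  have h1 : Sp ∩ {x} = ∅ := Finset.inter_singleton_of_notMem hp
  have h2 : (insert x Sn) ∩ ∅ = ∅ := inter_empty _
  have h3 : (Sp ∪ {x}) \ (insert x Sn ∪ ∅) = Sp := by
    rw [union_empty]
    ext a
    simp only [mem_sdiff, mem_union, mem_singleton, mem_insert]
    constructor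
    · rintro ⟨ha | rfl, hno⟩
      · exact ha
      · exact absurd (Or.inl rfl) hno
    · intro ha
      refine ⟨Or.inl ha, ?_⟩
      rintro (rfl | h)
      · exact hp ha
      · exact disjoint_left.1 hS ha h
  have h4 : (insert x Sn ∪ ∅) \ (Sp ∪ {x}) = Sn := by
    rw [union_empty]
    ext a
    simp only [mem_sdiff, mem_union, mem_singleton, mem_insert]
    constructor
    · rintro ⟨rfl | ha, hno⟩
      · exact absurd (Or.inr rfl) hno
      · exact ha
    · intro ha
      refine ⟨Or.inr ha, ?_⟩
      rintro (h | rfl)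
      · exact disjoint_right.1 hS ha h
      · exact hn ha
  rw [h1, h2, h3, h4, hA.zero] at hb
  have hs : |g {x} ∅| ≤ 1 := hA.single {x} ∅ (disjoint_empty_right _) (by simp)
  have := abs_le.1 hs
  linarith

lemma parity_step_p (hS : Disjoint Sp Sn) (hp : x ∉ Sp) (hn : x ∉ Sn) :
    g (insert x Sp) Sn = g Sp Sn + 1 ∨ g (insert x Sp) Sn = g Sp Sn - 1 := by
  have hd : Disjoint (insert x Sp) Sn := by
    rw [Finset.disjoint_insert_left]; exact ⟨hn, hS⟩
  have p1 := (hA.parity Sp Sn hS).dvd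
  have p2 := (hA.parity (insert x Sp) Sn hd).dvd
  rw [Finset.card_insert_of_notMem hp] at p2
  push_cast at p1 p2
  have h1 := step_up_p hA hS hp hn
  have h2 := step_down_p hA hS hp hn
  omega

lemma parity_step_n (hS : Disjoint Sp Sn) (hp : x ∉ Sp) (hn : x ∉ Sn) :
    g Sp (insert x Sn) = g Sp Sn + 1 ∨ g Sp (insert x Sn) = g Sp Sn - 1 := by
  have hd : Disjoint Sp (insert x Sn) := by
    rw [Finset.disjoint_insert_right]; exact ⟨hp, hS⟩
  have p1 := (hA.parity Sp Sn hS).dvd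
  have p2 := (hA.parity Sp (insert x Sn) hd).dvd
  rw [Finset.card_insert_of_notMem hn] at p2
  push_cast at p1 p2
  have h1 := step_up_n hA hS hp hn
  have h2 := step_down_n hA hS hp hn
  omega

end Steps

lemma chain : ∀ (k : ℕ) (Sp Sn Tp Tn : Finset (Fin n)),
    (Tp \ Sp).card + (Tn \ Sn).card = k → Disjoint Tp Tn → Sp ⊆ Tp → Sn ⊆ Tn →
    g Tp Tn ≤ g Sp Sn + (((Tp.card + Tn.card : ℕ) : ℤ) - ((Sp.card + Sn.card : ℕ) : ℤ)) ∧
    g Sp Sn ≤ g Tp Tn + (((Tp.card + Tn.card : ℕ) : ℤ) - ((Sp.card + Sn.card : ℕ) : ℤ)) := by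
  intro k
  induction k with
  | zero =>
    intro Sp Sn Tp Tn hk hT hp hn
    have h1 : Tp = Sp := Finset.Subset.antisymm
      (by rw [← Finset.sdiff_eq_empty_iff_subset]; exact Finset.card_eq_zero.1 (by omega)) hp
    have h2 : Tn = Sn := Finset.Subset.antisymm
      (by rw [← Finset.sdiff_eq_empty_iff_subset]; exact Finset.card_eq_zero.1 (by omega)) hn
    subst h1; subst h2
    constructor <;> simp
  | succ k ih =>
    intro Sp Sn Tp Tn hk hT hp hn
    by_cases hc : (Tp \ Sp).Nonempty
    · obtain ⟨x, hx⟩ := hc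
      rw [mem_sdiff] at hx
      obtain ⟨hxT, hxS⟩ := hx
      set Tp' := Tp.erase x with hTp'
      have hins : insert x Tp' = Tp := Finset.insert_erase hxT
      have hxT' : x ∉ Tp' := Finset.notMem_erase x Tp
      have hxTn : x ∉ Tn := disjoint_left.1 hT hxT
      have hd' : Disjoint Tp' Tn := hT.mono_left (Finset.erase_subset x Tp)
      have hsub : Sp ⊆ Tp' := (Finset.subset_erase).2 ⟨hp, hxS⟩
      have hcard : (Tp' \ Sp).card = (Tp \ Sp).card - 1 := by
        have hset : Tp.erase x \ Sp = (Tp \ Sp).erase x := by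
          ext a; simp only [mem_sdiff, Finset.mem_erase]; tauto
        rw [hTp', hset, Finset.card_erase_of_mem (mem_sdiff.2 ⟨hxT, hxS⟩)]
      have hkk : (Tp' \ Sp).card + (Tn \ Sn).card = k := by
        have hpos : 0 < (Tp \ Sp).card := Finset.card_pos.2 ⟨x, mem_sdiff.2 ⟨hxT, hxS⟩⟩
        omega
      obtain ⟨ih1, ih2⟩ := ih Sp Sn Tp' Tn hkk hd' hsub hn
      have hcT : Tp.card = Tp'.card + 1 := by
        rw [hTp', Finset.card_erase_of_mem hxT]
        have : 0 < Tp.card := Finset.card_pos.2 ⟨x, hxT⟩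
        omega
      have s1 : g Tp Tn ≤ g Tp' Tn + 1 := by rw [← hins]; exact step_up_p hA hd' hxT' hxTn
      have s2 : g Tp' Tn ≤ g Tp Tn + 1 := by
        have := step_down_p hA hd' hxT' hxTn
        rwa [hins] at this
      have hc1 : ((Sp.card : ℤ) + Sn.card) ≤ (Tp'.card : ℤ) + Tn.card := by
        have := Finset.card_le_card hsub
        have := Finset.card_le_card hn
        push_cast; omega
      push_cast at ih1 ih2 ⊢
      constructor <;> omega
    · have hcn : (Tn \ Sn).Nonempty := by
        rw [Finset.nonempty_iff_ne_empty]
        intro h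
        rw [Finset.not_nonempty_iff_eq_empty] at hc
        rw [hc, h] at hk
        simp at hk
      obtain ⟨x, hx⟩ := hcn
      rw [mem_sdiff] at hx
      obtain ⟨hxT, hxS⟩ := hx
      set Tn' := Tn.erase x with hTn'
      have hins : insert x Tn' = Tn := Finset.insert_erase hxT
      have hxT' : x ∉ Tn' := Finset.notMem_erase x Tn
      have hxTp : x ∉ Tp := disjoint_right.1 hT hxT
      have hd' : Disjoint Tp Tn' := hT.mono_right (Finset.erase_subset x Tn)
      have hsub : Sn ⊆ Tn' := (Finset.subset_erase).2 ⟨hn, hxS⟩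
      have hcard : (Tn' \ Sn).card = (Tn \ Sn).card - 1 := by
        have hset : Tn.erase x \ Sn = (Tn \ Sn).erase x := by
          ext a; simp only [mem_sdiff, Finset.mem_erase]; tauto
        rw [hTn', hset, Finset.card_erase_of_mem (mem_sdiff.2 ⟨hxT, hxS⟩)]
      have hkk : (Tp \ Sp).card + (Tn' \ Sn).card = k := by
        have hpos : 0 < (Tn \ Sn).card := Finset.card_pos.2 ⟨x, mem_sdiff.2 ⟨hxT, hxS⟩⟩
        omega
      obtain ⟨ih1, ih2⟩ := ih Sp Sn Tp Tn' hkk hd' hp hsub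
      have hcT : Tn.card = Tn'.card + 1 := by
        rw [hTn', Finset.card_erase_of_mem hxT]
        have : 0 < Tn.card := Finset.card_pos.2 ⟨x, hxT⟩
        omega
      have s1 : g Tp Tn ≤ g Tp Tn' + 1 := by rw [← hins]; exact step_up_n hA hd' hxTp hxT'
      have s2 : g Tp Tn' ≤ g Tp Tn + 1 := by
        have := step_down_n hA hd' hxTp hxT'
        rwa [hins] at this
      push_cast at ih1 ih2 ⊢
      constructor <;> omega

lemma g_le_card (Sp Sn : Finset (Fin n)) (hS : Disjoint Sp Sn) :
    g Sp Sn ≤ (Sp.card : ℤ) + Sn.card ∧ -((Sp.card : ℤ) + Sn.card) ≤ g Sp Sn := by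
  obtain ⟨h1, h2⟩ := chain hA (Sp.card + Sn.card) ∅ ∅ Sp Sn (by simp) hS
    (Finset.empty_subset _) (Finset.empty_subset _)
  rw [hA.zero] at h1 h2
  push_cast at h1 h2
  constructor <;> omega

lemma choice_step {Sp Sn : Finset (Fin n)} {x : Fin n} (hS : Disjoint Sp Sn)
    (hp : x ∉ Sp) (hn : x ∉ Sn) :
    g (insert x Sp) Sn = g Sp Sn + 1 ∨ g Sp (insert x Sn) = g Sp Sn + 1 := by
  have hdp : Disjoint (insert x Sp) Sn := by
    rw [Finset.disjoint_insert_left]; exact ⟨hn, hS⟩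
  have hdn : Disjoint Sp (insert x Sn) := by
    rw [Finset.disjoint_insert_right]; exact ⟨hp, hS⟩
  have hb := hA.bisub (insert x Sp) Sn Sp (insert x Sn) hdp hdn
  have h1 : (insert x Sp) ∩ Sp = Sp := by
    rw [Finset.inter_eq_right]; exact Finset.subset_insert x Sp
  have h2 : Sn ∩ (insert x Sn) = Sn := by
    rw [Finset.inter_eq_left]; exact Finset.subset_insert x Sn
  have h3 : (insert x Sp ∪ Sp) \ (Sn ∪ insert x Sn) = Sp := by
    ext a
    simp only [mem_sdiff, mem_union, mem_insert]
    constructor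
    · rintro ⟨(rfl | ha) | ha, hno⟩
      · exact absurd (Or.inr (Or.inl rfl)) hno
      · exact ha
      · exact ha
    · intro ha
      refine ⟨Or.inl (Or.inr ha), ?_⟩
      rintro (h | rfl | h)
      · exact disjoint_left.1 hS ha h
      · exact hp ha
      · exact disjoint_left.1 hS ha h
  have h4 : (Sn ∪ insert x Sn) \ (insert x Sp ∪ Sp) = Sn := by
    ext a
    simp only [mem_sdiff, mem_union, mem_insert]
    constructor
    · rintro ⟨ha | rfl | ha, hno⟩
      · exact ha
      · exact absurd (Or.inl (Or.inl rfl)) hno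
      · exact ha
    · intro ha
      refine ⟨Or.inl ha, ?_⟩
      rintro ((rfl | h) | h)
      · exact hn ha
      · exact disjoint_right.1 hS ha h
      · exact disjoint_right.1 hS ha h
  rw [h1, h2, h3, h4] at hb
  rcases parity_step_p hA hS hp hn with hp1 | hp1 <;>
    rcases parity_step_n hA hS hp hn with hn1 | hn1 <;> omega

lemma ext_full : ∀ (k : ℕ) (Sp Sn : Finset (Fin n)),
    (univ \ (Sp ∪ Sn)).card = k → Disjoint Sp Sn →
    g Sp Sn = (Sp.card : ℤ) + Sn.card →
    ∃ F : Finset (Fin n), Sp ⊆ F ∧ Disjoint F Sn ∧ g F (univ \ F) = n := by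
  intro k
  induction k with
  | zero =>
    intro Sp Sn hk hS hg
    have huniv : Sp ∪ Sn = univ := by
      have h1 : univ \ (Sp ∪ Sn) = ∅ := Finset.card_eq_zero.1 hk
      have := Finset.sdiff_eq_empty_iff_subset.1 h1
      exact Finset.Subset.antisymm (Finset.subset_univ _) this
    have hcompl : univ \ Sp = Sn := by
      ext a
      simp only [mem_sdiff, mem_univ, true_and]
      constructor
      · intro ha
        have : a ∈ Sp ∪ Sn := huniv ▸ mem_univ a
        rcases mem_union.1 this with h | h
        · exact absurd h ha
        · exact h
      · intro ha
        exact disjoint_right.1 hS ha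
    refine ⟨Sp, Finset.Subset.refl _, hS, ?_⟩
    rw [hcompl, hg]
    have := Finset.card_union_of_disjoint hS
    rw [huniv, Finset.card_univ, Fintype.card_fin] at this
    push_cast
    omega
  | succ k ih =>
    intro Sp Sn hk hS hg
    have hne : (univ \ (Sp ∪ Sn)).Nonempty := Finset.card_pos.1 (by omega)
    obtain ⟨x, hx⟩ := hne
    rw [mem_sdiff, mem_union] at hx
    push_neg at hx
    obtain ⟨-, hxp, hxn⟩ := hx
    rcases choice_step hA hS hxp hxn with h | h
    · have hd : Disjoint (insert x Sp) Sn := by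
        rw [Finset.disjoint_insert_left]; exact ⟨hxn, hS⟩
      have hm : (univ \ (insert x Sp ∪ Sn)).card = k := by
        have : univ \ (insert x Sp ∪ Sn) = (univ \ (Sp ∪ Sn)).erase x := by
          ext a
          simp only [mem_sdiff, mem_univ, true_and, mem_union, mem_insert, Finset.mem_erase]
          tauto
        rw [this, Finset.card_erase_of_mem (by
          rw [mem_sdiff, mem_union]; exact ⟨mem_univ x, by tauto⟩)]
        omega
      obtain ⟨F, hF1, hF2, hF3⟩ := ih (insert x Sp) Sn hm hd (by
        rw [h, hg, Finset.card_insert_of_notMem hxp]; push_cast; ring)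
      exact ⟨F, (Finset.subset_insert x Sp).trans hF1, hF2, hF3⟩
    · have hd : Disjoint Sp (insert x Sn) := by
        rw [Finset.disjoint_insert_right]; exact ⟨hxp, hS⟩
      have hm : (univ \ (Sp ∪ insert x Sn)).card = k := by
        have : univ \ (Sp ∪ insert x Sn) = (univ \ (Sp ∪ Sn)).erase x := by
          ext a
          simp only [mem_sdiff, mem_univ, true_and, mem_union, mem_insert, Finset.mem_erase]
          tauto
        rw [this, Finset.card_erase_of_mem (by
          rw [mem_sdiff, mem_union]; exact ⟨mem_univ x, by tauto⟩)]
        omega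
      obtain ⟨F, hF1, hF2, hF3⟩ := ih Sp (insert x Sn) hm hd (by
        rw [h, hg, Finset.card_insert_of_notMem hxn]; push_cast; ring)
      exact ⟨F, hF1, hF2.mono_right (Finset.subset_insert x Sn), hF3⟩


lemma feas_lower {Sp Sn : Finset (Fin n)} (hS : Disjoint Sp Sn) (F : Finset (Fin n))
    (hF : g F (univ \ F) = n) : sig F Sp Sn ≤ g Sp Sn := by
  have hMd : Disjoint (Sp ∩ F) (Sn \ F) := hS.mono inter_subset_left sdiff_subset
  have hsub1p : Sp ∩ F ⊆ F := inter_subset_right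
  have hsub1n : Sn \ F ⊆ univ \ F := sdiff_subset_sdiff (subset_univ Sn) (Finset.Subset.refl F)
  have hdF : Disjoint F (univ \ F) := disjoint_sdiff
  obtain ⟨c1, -⟩ := chain hA _ (Sp ∩ F) (Sn \ F) F (univ \ F) rfl hdF hsub1p hsub1n
  obtain ⟨-, c2⟩ := chain hA _ (Sp ∩ F) (Sn \ F) Sp Sn rfl hS inter_subset_left sdiff_subset
  rw [hF] at c1
  have hcF : (univ \ F).card + F.card = n := by
    rw [Finset.card_sdiff_of_subset (subset_univ F), Finset.card_univ, Fintype.card_fin]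
    have := Finset.card_le_card (subset_univ F)
    rw [Finset.card_univ, Fintype.card_fin] at this
    omega
  have e1 : (Sp ∩ F).card + (Sp \ F).card = Sp.card := Finset.card_inter_add_card_sdiff Sp F
  have e2 : (Sn ∩ F).card + (Sn \ F).card = Sn.card := Finset.card_inter_add_card_sdiff Sn F
  rw [← sig_eq F Sp Sn]
  push_cast at c1 c2 ⊢
  omega

lemma loc : ∀ (k : ℕ) (Sp Sn Tp Tn : Finset (Fin n)),
    (Tp \ Sp).card + (Tn \ Sn).card = k → Disjoint Tp Tn → Sp ⊆ Tp → Sn ⊆ Tn →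
    g Sp Sn = (Sp.card : ℤ) + Sn.card →
    (∀ y ∈ Tp \ Sp, g (Tp.erase y) Tn = g Tp Tn - 1) →
    (∀ y ∈ Tn \ Sn, g Tp (Tn.erase y) = g Tp Tn - 1) →
    g Tp Tn = (Tp.card : ℤ) + Tn.card := by
  intro k
  induction k with
  | zero =>
    intro Sp Sn Tp Tn hk hT hp hn hg _ _
    have h1 : Tp = Sp := Finset.Subset.antisymm
      (by rw [← Finset.sdiff_eq_empty_iff_subset]; exact Finset.card_eq_zero.1 (by omega)) hp
    have h2 : Tn = Sn := Finset.Subset.antisymm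
      (by rw [← Finset.sdiff_eq_empty_iff_subset]; exact Finset.card_eq_zero.1 (by omega)) hn
    rw [h1, h2]; exact hg
  | succ k ih =>
    intro Sp Sn Tp Tn hk hT hp hn hg H1 H2
    by_cases hc : (Tp \ Sp).Nonempty
    · obtain ⟨x, hx⟩ := hc
      obtain ⟨hxT, hxS⟩ := mem_sdiff.1 hx
      set Tp' := Tp.erase x with hTp'
      have hins : insert x Tp' = Tp := Finset.insert_erase hxT
      have hd' : Disjoint Tp' Tn := hT.mono_left (Finset.erase_subset x Tp)
      have hsub : Sp ⊆ Tp' := (Finset.subset_erase).2 ⟨hp, hxS⟩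
      have hkk : (Tp' \ Sp).card + (Tn \ Sn).card = k := by
        have hset : Tp.erase x \ Sp = (Tp \ Sp).erase x := by
          ext a; simp only [mem_sdiff, Finset.mem_erase]; tauto
        have : (Tp' \ Sp).card = (Tp \ Sp).card - 1 := by
          rw [hTp', hset, Finset.card_erase_of_mem hx]
        have hpos : 0 < (Tp \ Sp).card := Finset.card_pos.2 ⟨x, hx⟩
        omega
      have hgT' : g Tp' Tn = g Tp Tn - 1 := H1 x hx
      have H1' : ∀ z ∈ Tp' \ Sp, g (Tp'.erase z) Tn = g Tp' Tn - 1 := by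
        intro z hz
        obtain ⟨hzT', hzS⟩ := mem_sdiff.1 hz
        have hzx : z ≠ x := Finset.ne_of_mem_erase hzT'
        have hzT : z ∈ Tp := Finset.mem_of_mem_erase hzT'
        have hdz : Disjoint (Tp.erase z) Tn := hT.mono_left (Finset.erase_subset z Tp)
        have hb := hA.bisub (Tp.erase z) Tn Tp' Tn hdz hd'
        have i1 : (Tp.erase z) ∩ Tp' = Tp'.erase z := by
          ext a
          simp only [mem_inter, Finset.mem_erase, hTp']
          tauto
        have i3 : (Tp.erase z ∪ Tp') \ (Tn ∪ Tn) = Tp := by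
          rw [union_self]
          ext a
          simp only [mem_sdiff, mem_union, Finset.mem_erase, hTp']
          constructor
          · rintro ⟨⟨-, h⟩ | ⟨-, h⟩, -⟩ <;> exact h
          · intro ha
            refine ⟨?_, disjoint_left.1 hT ha⟩
            by_cases haz : a = z
            · right; subst haz; exact ⟨hzx, ha⟩
            · left; exact ⟨haz, ha⟩
        have i4 : (Tn ∪ Tn) \ (Tp.erase z ∪ Tp') = Tn := by
          rw [union_self]
          refine sdiff_eq_self_of_disjoint (Finset.disjoint_union_right.2
            ⟨hT.symm.mono_right (Finset.erase_subset z Tp), hd'.symm⟩)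
        rw [i1, inter_self, i3, i4] at hb
        have hz1 : g (Tp.erase z) Tn = g Tp Tn - 1 := H1 z (mem_sdiff.2 ⟨hzT, hzS⟩)
        have hins2 : insert z (Tp'.erase z) = Tp' := Finset.insert_erase hzT'
        have hd2 : Disjoint (Tp'.erase z) Tn := hd'.mono_left (Finset.erase_subset z Tp')
        have hstep : g Tp' Tn ≤ g (Tp'.erase z) Tn + 1 := by
          have := step_up_p hA hd2 (Finset.notMem_erase z Tp') (disjoint_left.1 hd' hzT')
          rwa [hins2] at this
        omega
      have H2' : ∀ z ∈ Tn \ Sn, g Tp' (Tn.erase z) = g Tp' Tn - 1 := by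
        intro z hz
        obtain ⟨hzT, hzS⟩ := mem_sdiff.1 hz
        have hdz : Disjoint Tp (Tn.erase z) := hT.mono_right (Finset.erase_subset z Tn)
        have hb := hA.bisub Tp (Tn.erase z) Tp' Tn hdz hd'
        have i1 : Tp ∩ Tp' = Tp' := inter_eq_right.2 (Finset.erase_subset x Tp)
        have i2 : (Tn.erase z) ∩ Tn = Tn.erase z := inter_eq_left.2 (Finset.erase_subset z Tn)
        have i3 : (Tp ∪ Tp') \ (Tn.erase z ∪ Tn) = Tp := by
          rw [union_eq_left.2 (Finset.erase_subset x Tp),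
            union_eq_right.2 (Finset.erase_subset z Tn)]
          exact sdiff_eq_self_of_disjoint hT
        have i4 : (Tn.erase z ∪ Tn) \ (Tp ∪ Tp') = Tn := by
          rw [union_eq_left.2 (Finset.erase_subset x Tp),
            union_eq_right.2 (Finset.erase_subset z Tn)]
          exact sdiff_eq_self_of_disjoint hT.symm
        rw [i1, i2, i3, i4] at hb
        have hz2 : g Tp (Tn.erase z) = g Tp Tn - 1 := H2 z hz
        have hins2 : insert z (Tn.erase z) = Tn := Finset.insert_erase hzT
        have hd2 : Disjoint Tp' (Tn.erase z) := hd'.mono_right (Finset.erase_subset z Tn)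
        have hstep : g Tp' Tn ≤ g Tp' (Tn.erase z) + 1 := by
          have := step_up_n hA hd2 (disjoint_right.1 hd' hzT) (Finset.notMem_erase z Tn)
          rwa [hins2] at this
        omega
      have hres := ih Sp Sn Tp' Tn hkk hd' hsub hn hg H1' H2'
      have hcT : Tp.card = Tp'.card + 1 := by
        rw [hTp', Finset.card_erase_of_mem hxT]
        have : 0 < Tp.card := Finset.card_pos.2 ⟨x, hxT⟩
        omega
      push_cast at hres ⊢
      omega
    · have hcn : (Tn \ Sn).Nonempty := by
        rw [Finset.nonempty_iff_ne_empty]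
        intro h
        rw [Finset.not_nonempty_iff_eq_empty] at hc
        rw [hc, h] at hk
        simp at hk
      obtain ⟨x, hx⟩ := hcn
      obtain ⟨hxT, hxS⟩ := mem_sdiff.1 hx
      set Tn' := Tn.erase x with hTn'
      have hins : insert x Tn' = Tn := Finset.insert_erase hxT
      have hd' : Disjoint Tp Tn' := hT.mono_right (Finset.erase_subset x Tn)
      have hsub : Sn ⊆ Tn' := (Finset.subset_erase).2 ⟨hn, hxS⟩
      have hkk : (Tp \ Sp).card + (Tn' \ Sn).card = k := by
        have hset : Tn.erase x \ Sn = (Tn \ Sn).erase x := by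
          ext a; simp only [mem_sdiff, Finset.mem_erase]; tauto
        have : (Tn' \ Sn).card = (Tn \ Sn).card - 1 := by
          rw [hTn', hset, Finset.card_erase_of_mem hx]
        have hpos : 0 < (Tn \ Sn).card := Finset.card_pos.2 ⟨x, hx⟩
        omega
      have hgT' : g Tp Tn' = g Tp Tn - 1 := H2 x hx
      have H1' : ∀ z ∈ Tp \ Sp, g (Tp.erase z) Tn' = g Tp Tn' - 1 := by
        intro z hz
        obtain ⟨hzT, hzS⟩ := mem_sdiff.1 hz
        have hdz : Disjoint (Tp.erase z) Tn := hT.mono_left (Finset.erase_subset z Tp)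
        have hb := hA.bisub (Tp.erase z) Tn Tp Tn' hdz hd'
        have i1 : (Tp.erase z) ∩ Tp = Tp.erase z := inter_eq_left.2 (Finset.erase_subset z Tp)
        have i2 : Tn ∩ Tn' = Tn' := inter_eq_right.2 (Finset.erase_subset x Tn)
        have i3 : (Tp.erase z ∪ Tp) \ (Tn ∪ Tn') = Tp := by
          rw [union_eq_right.2 (Finset.erase_subset z Tp),
            union_eq_left.2 (Finset.erase_subset x Tn)]
          exact sdiff_eq_self_of_disjoint hT
        have i4 : (Tn ∪ Tn') \ (Tp.erase z ∪ Tp) = Tn := by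
          rw [union_eq_right.2 (Finset.erase_subset z Tp),
            union_eq_left.2 (Finset.erase_subset x Tn)]
          exact sdiff_eq_self_of_disjoint hT.symm
        rw [i1, i2, i3, i4] at hb
        have hz1 : g (Tp.erase z) Tn = g Tp Tn - 1 := H1 z hz
        have hins2 : insert z (Tp.erase z) = Tp := Finset.insert_erase hzT
        have hd2 : Disjoint (Tp.erase z) Tn' := hd'.mono_left (Finset.erase_subset z Tp)
        have hstep : g Tp Tn' ≤ g (Tp.erase z) Tn' + 1 := by
          have := step_up_p hA hd2 (Finset.notMem_erase z Tp) (disjoint_left.1 hd' hzT)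
          rwa [hins2] at this
        omega
      have H2' : ∀ z ∈ Tn' \ Sn, g Tp (Tn'.erase z) = g Tp Tn' - 1 := by
        intro z hz
        obtain ⟨hzT', hzS⟩ := mem_sdiff.1 hz
        have hzx : z ≠ x := Finset.ne_of_mem_erase hzT'
        have hzT : z ∈ Tn := Finset.mem_of_mem_erase hzT'
        have hdz : Disjoint Tp (Tn.erase z) := hT.mono_right (Finset.erase_subset z Tn)
        have hb := hA.bisub Tp (Tn.erase z) Tp Tn' hdz hd'
        have i1 : (Tn.erase z) ∩ Tn' = Tn'.erase z := by
          ext a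
          simp only [mem_inter, Finset.mem_erase, hTn']
          tauto
        have i3 : (Tp ∪ Tp) \ (Tn.erase z ∪ Tn') = Tp := by
          rw [union_self]
          refine sdiff_eq_self_of_disjoint (Finset.disjoint_union_right.2
            ⟨hT.mono_right (Finset.erase_subset z Tn), hd'⟩)
        have i4 : (Tn.erase z ∪ Tn') \ (Tp ∪ Tp) = Tn := by
          rw [union_self]
          have he : Tn.erase z ∪ Tn' = Tn := by
            ext a
            simp only [mem_union, Finset.mem_erase, hTn']
            constructor
            · rintro (⟨-, h⟩ | ⟨-, h⟩) <;> exact h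
            · intro ha
              by_cases haz : a = z
              · right; subst haz; exact ⟨hzx, ha⟩
              · left; exact ⟨haz, ha⟩
          rw [he]
          exact sdiff_eq_self_of_disjoint hT.symm
        rw [inter_self, i1, i3, i4] at hb
        have hz2 : g Tp (Tn.erase z) = g Tp Tn - 1 := H2 z (mem_sdiff.2 ⟨hzT, hzS⟩)
        have hins2 : insert z (Tn'.erase z) = Tn' := Finset.insert_erase hzT'
        have hd2 : Disjoint Tp (Tn'.erase z) := hd'.mono_right (Finset.erase_subset z Tn')
        have hstep : g Tp Tn' ≤ g Tp (Tn'.erase z) + 1 := by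
          have := step_up_n hA hd2 (disjoint_right.1 hd' hzT') (Finset.notMem_erase z Tn')
          rwa [hins2] at this
        omega
      have hres := ih Sp Sn Tp Tn' hkk hd' hp hsub hg H1' H2'
      have hcT : Tn.card = Tn'.card + 1 := by
        rw [hTn', Finset.card_erase_of_mem hxT]
        have : 0 < Tn.card := Finset.card_pos.2 ⟨x, hxT⟩
        omega
      push_cast at hres ⊢
      omega


lemma full_case {Tp Tn : Finset (Fin n)} (hT : Disjoint Tp Tn)
    (hful : g Tp Tn = (Tp.card : ℤ) + Tn.card) :
    ∃ F : Finset (Fin n), Tp ⊆ F ∧ Disjoint F Tn ∧ g F (univ \ F) = n ∧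
      g Tp Tn ≤ sig F Tp Tn := by
  obtain ⟨F, h1, h2, h3⟩ := ext_full hA _ Tp Tn rfl hT hful
  refine ⟨F, h1, h2, h3, ?_⟩
  have e1 : Tp ∩ F = Tp := inter_eq_left.2 h1
  have e2 : Tn \ F = Tn := sdiff_eq_self_of_disjoint h2.symm
  have e3 : Tn ∩ F = ∅ := by
    rw [← Finset.disjoint_iff_inter_eq_empty]; exact h2.symm
  have e4 : Tp \ F = ∅ := Finset.sdiff_eq_empty_iff_subset.2 h1
  rw [← sig_eq, e1, e2, e3, e4, hful]
  simp

lemma main : ∀ (k : ℕ) (Sp Sn Tp Tn : Finset (Fin n)),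
    (Tp \ Sp).card + (Tn \ Sn).card = k → Disjoint Tp Tn → Sp ⊆ Tp → Sn ⊆ Tn →
    g Sp Sn = (Sp.card : ℤ) + Sn.card →
    ∃ F : Finset (Fin n), Sp ⊆ F ∧ Disjoint F Sn ∧ g F (univ \ F) = n ∧
      g Tp Tn ≤ sig F Tp Tn := by
  intro k
  induction k with
  | zero =>
    intro Sp Sn Tp Tn hk hT hp hn hg
    have h1 : Tp = Sp := Finset.Subset.antisymm
      (by rw [← Finset.sdiff_eq_empty_iff_subset]; exact Finset.card_eq_zero.1 (by omega)) hp
    have h2 : Tn = Sn := Finset.Subset.antisymm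
      (by rw [← Finset.sdiff_eq_empty_iff_subset]; exact Finset.card_eq_zero.1 (by omega)) hn
    subst h1; subst h2
    obtain ⟨F, hF1, hF2, hF3, hF4⟩ := full_case hA hT hg
    exact ⟨F, hF1, hF2, hF3, hF4⟩
  | succ k ih =>
    intro Sp Sn Tp Tn hk hT hp hn hg
    by_cases hful : g Tp Tn = (Tp.card : ℤ) + Tn.card
    · obtain ⟨F, hF1, hF2, hF3, hF4⟩ := full_case hA hT hful
      exact ⟨F, hp.trans hF1, hF2.mono_right hn, hF3, hF4⟩
    · have hnotall : ¬((∀ y ∈ Tp \ Sp, g (Tp.erase y) Tn = g Tp Tn - 1) ∧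
          (∀ y ∈ Tn \ Sn, g Tp (Tn.erase y) = g Tp Tn - 1)) := by
        rintro ⟨H1, H2⟩
        exact hful (loc hA _ Sp Sn Tp Tn rfl hT hp hn hg H1 H2)
      rcases not_and_or.1 hnotall with hH | hH
      · push_neg at hH
        obtain ⟨y, hy, hne⟩ := hH
        obtain ⟨hyT, hyS⟩ := mem_sdiff.1 hy
        have hins : insert y (Tp.erase y) = Tp := Finset.insert_erase hyT
        have hd' : Disjoint (Tp.erase y) Tn := hT.mono_left (Finset.erase_subset y Tp)
        have hyTn : y ∉ Tn := disjoint_left.1 hT hyT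
        have hstep : g (Tp.erase y) Tn = g Tp Tn + 1 := by
          rcases parity_step_p hA hd' (Finset.notMem_erase y Tp) hyTn with h | h <;>
            rw [hins] at h <;> omega
        have hkk : (Tp.erase y \ Sp).card + (Tn \ Sn).card = k := by
          have hset : Tp.erase y \ Sp = (Tp \ Sp).erase y := by
            ext a; simp only [mem_sdiff, Finset.mem_erase]; tauto
          have : (Tp.erase y \ Sp).card = (Tp \ Sp).card - 1 := by
            rw [hset, Finset.card_erase_of_mem hy]
          have hpos : 0 < (Tp \ Sp).card := Finset.card_pos.2 ⟨y, hy⟩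
          omega
        obtain ⟨F, hF1, hF2, hF3, hF4⟩ := ih Sp Sn (Tp.erase y) Tn hkk hd'
          ((Finset.subset_erase).2 ⟨hp, hyS⟩) hn hg
        refine ⟨F, hF1, hF2, hF3, ?_⟩
        have hsig : sig F Tp Tn = sig F (Tp.erase y) Tn + chi F y := by
          have h0 := sig_insert_p F (Tp.erase y) Tn y (Finset.notMem_erase y Tp)
          rwa [hins] at h0
        rcases chi_cases F y with h | h <;> omega
      · push_neg at hH
        obtain ⟨y, hy, hne⟩ := hH
        obtain ⟨hyT, hyS⟩ := mem_sdiff.1 hy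
        have hins : insert y (Tn.erase y) = Tn := Finset.insert_erase hyT
        have hd' : Disjoint Tp (Tn.erase y) := hT.mono_right (Finset.erase_subset y Tn)
        have hyTp : y ∉ Tp := disjoint_right.1 hT hyT
        have hstep : g Tp (Tn.erase y) = g Tp Tn + 1 := by
          rcases parity_step_n hA hd' hyTp (Finset.notMem_erase y Tn) with h | h <;>
            rw [hins] at h <;> omega
        have hkk : (Tp \ Sp).card + (Tn.erase y \ Sn).card = k := by
          have hset : Tn.erase y \ Sn = (Tn \ Sn).erase y := by
            ext a; simp only [mem_sdiff, Finset.mem_erase]; tauto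
          have : (Tn.erase y \ Sn).card = (Tn \ Sn).card - 1 := by
            rw [hset, Finset.card_erase_of_mem hy]
          have hpos : 0 < (Tn \ Sn).card := Finset.card_pos.2 ⟨y, hy⟩
          omega
        obtain ⟨F, hF1, hF2, hF3, hF4⟩ := ih Sp Sn Tp (Tn.erase y) hkk hd'
          hp ((Finset.subset_erase).2 ⟨hn, hyS⟩) hg
        refine ⟨F, hF1, hF2, hF3, ?_⟩
        have hsig : sig F Tp Tn = sig F Tp (Tn.erase y) - chi F y := by
          have h0 := sig_insert_n F Tp (Tn.erase y) y (Finset.notMem_erase y Tn)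
          rwa [hins] at h0
        rcases chi_cases F y with h | h <;> omega


lemma exchange_feas {F₁ F₂ : Finset (Fin n)} (h1 : g F₁ (univ \ F₁) = n)
    (h2 : g F₂ (univ \ F₂) = n) {x : Fin n} (hx : x ∈ F₁ ∆ F₂) :
    ∃ y ∈ F₁ ∆ F₂, g (F₁ ∆ {x, y}) (univ \ (F₁ ∆ {x, y})) = n := by
  have hxm : (x ∈ F₁ ∧ x ∉ F₂) ∨ (x ∈ F₂ ∧ x ∉ F₁) := Finset.mem_symmDiff.1 hx
  set Sp : Finset (Fin n) := (F₁ ∩ F₂) ∪ ({x} ∩ F₂) with hSp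
  set Sn : Finset (Fin n) := (univ \ (F₁ ∪ F₂)) ∪ ({x} \ F₂) with hSn
  set A : Finset (Fin n) := F₁ ∆ {x} with hA'
  have hmemA : ∀ a, a ∈ A ↔ ((a ∈ F₁ ∧ a ≠ x) ∨ (a = x ∧ a ∉ F₁)) := by
    intro a
    rw [hA', Finset.mem_symmDiff, mem_singleton]
  have hSpmem : ∀ a, a ∈ Sp ↔ ((a ∈ F₁ ∧ a ∈ F₂) ∨ (a = x ∧ a ∈ F₂)) := by
    intro a
    simp only [hSp, mem_union, mem_inter, mem_singleton]
  have hSnmem : ∀ a, a ∈ Sn ↔ ((a ∉ F₁ ∧ a ∉ F₂) ∨ (a = x ∧ a ∉ F₂)) := by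
    intro a
    simp only [hSn, mem_union, mem_sdiff, mem_univ, true_and, mem_singleton]
    tauto
  have hSpF2 : ∀ a ∈ Sp, a ∈ F₂ := by
    intro a ha; rcases (hSpmem a).1 ha with h | h <;> exact h.2
  have hSnF2 : ∀ a ∈ Sn, a ∉ F₂ := by
    intro a ha; rcases (hSnmem a).1 ha with h | h <;> exact h.2
  have hSpA : ∀ a ∈ Sp, a ∈ A := by
    intro a ha
    rcases (hSpmem a).1 ha with ⟨h1', h2'⟩ | ⟨rfl, h2'⟩
    · refine (hmemA a).2 (Or.inl ⟨h1', ?_⟩)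
      rintro rfl
      rcases hxm with ⟨-, hh⟩ | ⟨-, hh⟩ <;> [exact hh h2'; exact hh h1']
    · refine (hmemA a).2 (Or.inr ⟨rfl, ?_⟩)
      rcases hxm with ⟨-, hh⟩ | ⟨-, hh⟩ <;> [exact absurd h2' hh; exact hh]
  have hSnA : ∀ a ∈ Sn, a ∉ A := by
    intro a ha hmem
    rcases (hSnmem a).1 ha with ⟨h1', h2'⟩ | ⟨rfl, h2'⟩
    · rcases (hmemA a).1 hmem with ⟨hh, -⟩ | ⟨rfl, -⟩
      · exact h1' hh
      · rcases hxm with ⟨hh, -⟩ | ⟨hh, -⟩ <;> [exact h1' hh; exact h2' hh]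
    · rcases (hmemA a).1 hmem with ⟨-, hh⟩ | ⟨-, hh⟩
      · exact hh rfl
      · rcases hxm with ⟨hh', -⟩ | ⟨hh', -⟩ <;> [exact hh hh'; exact h2' hh']
  have hd : Disjoint Sp Sn := by
    rw [Finset.disjoint_left]
    intro a ha hb
    exact hSnF2 a hb (hSpF2 a ha)
  have hsig2 : sig F₂ Sp Sn = (Sp.card : ℤ) + Sn.card := by
    have e1 : Sp ∩ F₂ = Sp := inter_eq_left.2 (fun a ha => hSpF2 a ha)
    have e2 : Sn \ F₂ = Sn := sdiff_eq_self_of_disjoint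
      (Finset.disjoint_left.2 fun a ha => hSnF2 a ha)
    have e3 : Sn ∩ F₂ = ∅ := by
      rw [← Finset.disjoint_iff_inter_eq_empty]
      exact Finset.disjoint_left.2 fun a ha => hSnF2 a ha
    have e4 : Sp \ F₂ = ∅ := Finset.sdiff_eq_empty_iff_subset.2 (fun a ha => hSpF2 a ha)
    rw [← sig_eq, e1, e2, e3, e4]
    simp
  have hcard : g Sp Sn = (Sp.card : ℤ) + Sn.card := by
    have hub := (g_le_card hA Sp Sn hd).1
    have hlb := feas_lower hA hd F₂ h2
    rw [hsig2] at hlb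
    omega
  have hTd : Disjoint A (univ \ A) := disjoint_sdiff
  have hsubp : Sp ⊆ A := fun a ha => hSpA a ha
  have hsubn : Sn ⊆ univ \ A := fun a ha => mem_sdiff.2 ⟨mem_univ a, hSnA a ha⟩
  obtain ⟨F, hF1, hF2d, hF3, hF4⟩ := main hA _ Sp Sn A (univ \ A) rfl hTd hsubp hsubn hcard
  have hlow : (n : ℤ) - 2 ≤ g A (univ \ A) := by
    have hl := feas_lower hA hTd F₁ h1
    rw [sig_full] at hl
    have hAF1 : A ∆ F₁ = {x} := by
      rw [hA', symmDiff_comm (F₁ ∆ {x}) F₁]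
      exact symmDiff_symmDiff_cancel_left F₁ ({x} : Finset (Fin n))
    rw [hAF1, Finset.card_singleton] at hl
    push_cast at hl
    linarith
  rw [sig_full] at hF4
  by_cases hAF : A = F
  · refine ⟨x, hx, ?_⟩
    have hxx : ({x, x} : Finset (Fin n)) = {x} :=
      Finset.insert_eq_self.2 (mem_singleton_self x)
    rw [hxx, ← hA', hAF]
    exact hF3
  · have hone : (A ∆ F).card = 1 := by
      have hnz : A ∆ F ≠ ∅ := fun h => hAF (by rwa [← bot_eq_empty, symmDiff_eq_bot] at h)
      have hge : 1 ≤ (A ∆ F).card := Finset.card_pos.2 (Finset.nonempty_iff_ne_empty.2 hnz)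
      have : ((A ∆ F).card : ℤ) ≤ 1 := by linarith
      omega
    obtain ⟨y, hy⟩ := Finset.card_eq_one.1 hone
    have hyA : y ∈ A ∆ F := hy ▸ mem_singleton_self y
    have hySp : y ∉ Sp := by
      intro hmem
      have hy1 := hSpA y hmem
      have hy2 := hF1 hmem
      rcases Finset.mem_symmDiff.1 hyA with ⟨-, hh⟩ | ⟨-, hh⟩ <;> [exact hh hy2; exact hh hy1]
    have hySn : y ∉ Sn := by
      intro hmem
      have hy1 := hSnA y hmem
      have hy2 : y ∉ F := Finset.disjoint_right.1 hF2d hmem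
      rcases Finset.mem_symmDiff.1 hyA with ⟨hh, -⟩ | ⟨hh, -⟩ <;> [exact hy1 hh; exact hy2 hh]
    have hyx : y ≠ x := by
      rintro rfl
      rcases hxm with ⟨hh1, hh2⟩ | ⟨hh1, hh2⟩
      · exact hySn ((hSnmem y).2 (Or.inr ⟨rfl, hh2⟩))
      · exact hySp ((hSpmem y).2 (Or.inr ⟨rfl, hh1⟩))
    have hyF12 : y ∈ F₁ ∆ F₂ := by
      rw [Finset.mem_symmDiff]
      have h1' := fun hh => hySp ((hSpmem y).2 (Or.inl hh))
      have h2' := fun hh => hySn ((hSnmem y).2 (Or.inl hh))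
      by_cases hh1 : y ∈ F₁ <;> by_cases hh2 : y ∈ F₂ <;> tauto
    have hFA : F = A ∆ {y} := by
      have hcan : A ∆ (A ∆ F) = F := symmDiff_symmDiff_cancel_left A F
      rw [hy] at hcan
      exact hcan.symm
    have hxy : ({x, y} : Finset (Fin n)) = {x} ∆ {y} := by
      ext a
      rw [Finset.mem_symmDiff]
      simp only [mem_insert, mem_singleton]
      constructor
      · rintro (rfl | rfl)
        · exact Or.inl ⟨rfl, fun hh => hyx hh.symm⟩
        · exact Or.inr ⟨rfl, fun hh => hyx (by rw [hh])⟩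
      · rintro (⟨rfl, -⟩ | ⟨rfl, -⟩)
        · exact Or.inl rfl
        · exact Or.inr rfl
    refine ⟨y, hyF12, ?_⟩
    rw [hxy, ← symmDiff_assoc, ← hA', ← hFA]
    exact hF3



omit hA in
lemma gFam_zero (G : Finset (Finset (Fin n))) (h : G.Nonempty) : gFam G ∅ ∅ = 0 := by
  rw [gFam_eq G h]
  have he : ∀ F ∈ G, sig F ∅ ∅ = (0:ℤ) := by intro F _; simp [sig, w]
  rw [Finset.sup'_congr h rfl he]
  exact Finset.sup'_const h 0

omit hA in
lemma gFam_abs (G : Finset (Finset (Fin n))) (h : G.Nonempty) (Sp Sn : Finset (Fin n)) :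
    |gFam G Sp Sn| ≤ (Sp.card : ℤ) + Sn.card := by
  rw [gFam_eq G h, abs_le]
  obtain ⟨F₀, hF₀⟩ := h
  constructor
  · refine le_trans ?_ (Finset.le_sup' (fun F => sig F Sp Sn) hF₀)
    have := (abs_le.1 (abs_sig_le F₀ Sp Sn)).1
    linarith
  · exact Finset.sup'_le _ _ fun F _ => (abs_le.1 (abs_sig_le F Sp Sn)).2

omit hA in
lemma gFam_parity (G : Finset (Finset (Fin n))) (h : G.Nonempty) (Sp Sn : Finset (Fin n)) :
    gFam G Sp Sn ≡ ((Sp.card : ℤ) + Sn.card) [ZMOD 2] := by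
  obtain ⟨F, hF, he⟩ := Finset.exists_mem_eq_sup' h (fun F => sig F Sp Sn)
  rw [gFam_eq G h, he]
  have := sig_parity F Sp Sn
  exact Int.modEq_iff_dvd.2 (by omega)

lemma backward :
    ∃ D : DeltaMatroid n, ∀ Sp Sn : Finset (Fin n),
      Disjoint Sp Sn → g Sp Sn = D.g Sp Sn := by
  classical
  set feas : Finset (Finset (Fin n)) :=
    univ.filter (fun F => g F (univ \ F) = n) with hfeas
  have hmem : ∀ F, F ∈ feas ↔ g F (univ \ F) = n := by
    intro F; rw [hfeas, mem_filter]; simp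
  have hne : feas.Nonempty := by
    obtain ⟨F, -, -, hF3, -⟩ := main hA 0 ∅ ∅ ∅ ∅ (by simp) (disjoint_bot_left)
      (Finset.Subset.refl _) (Finset.Subset.refl _) (by rw [hA.zero]; simp)
    exact ⟨F, (hmem F).2 hF3⟩
  refine ⟨⟨feas, hne, ?_⟩, ?_⟩
  · intro F₁ h₁ F₂ h₂ x hx
    obtain ⟨y, hy, hg'⟩ := exchange_feas hA ((hmem F₁).1 h₁) ((hmem F₂).1 h₂) hx
    exact ⟨y, hy, (hmem _).2 hg'⟩
  · intro Sp Sn hS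
    show g Sp Sn = gFam feas Sp Sn
    rw [gFam_eq feas hne]
    refine le_antisymm ?_
      (Finset.sup'_le hne _ fun F hF => feas_lower hA hS F ((hmem F).1 hF))
    obtain ⟨F, -, -, hF3, hF4⟩ := main hA _ ∅ ∅ Sp Sn rfl hS
      (Finset.empty_subset _) (Finset.empty_subset _) (by rw [hA.zero]; simp)
    exact le_trans hF4 (Finset.le_sup' (fun F => sig F Sp Sn) ((hmem F).2 hF3))


end DMaux

/-- **Theorem (rank axioms for delta-matroids).** A function `g` on admissible sets on `[n]` is
the rank function of a delta-matroid if and only if it is normalized, bounded on singletons,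
bisubmodular, and satisfies the parity condition. -/
theorem deltaMatroid_rank_characterization (n : ℕ)
    (g : Finset (Fin n) → Finset (Fin n) → ℤ) :
    (∃ D : DeltaMatroid n, ∀ Sp Sn : Finset (Fin n), Disjoint Sp Sn → g Sp Sn = D.g Sp Sn) ↔
      (g ∅ ∅ = 0 ∧
        (∀ Sp Sn : Finset (Fin n), Disjoint Sp Sn → Sp.card + Sn.card = 1 → |g Sp Sn| ≤ 1) ∧
        (∀ Sp Sn Tp Tn : Finset (Fin n), Disjoint Sp Sn → Disjoint Tp Tn →
          g (Sp ∩ Tp) (Sn ∩ Tn) + g ((Sp ∪ Tp) \ (Sn ∪ Tn)) ((Sn ∪ Tn) \ (Sp ∪ Tp))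
            ≤ g Sp Sn + g Tp Tn) ∧
        (∀ Sp Sn : Finset (Fin n), Disjoint Sp Sn →
          g Sp Sn ≡ ((Sp.card : ℤ) + (Sn.card : ℤ)) [ZMOD 2])) := by
  constructor
  · rintro ⟨D, hD⟩
    have hne := D.nonempty
    refine ⟨?_, ?_, ?_, ?_⟩
    · rw [hD ∅ ∅ disjoint_bot_left]
      exact DMaux.gFam_zero D.feas hne
    · intro Sp Sn hS hc
      rw [hD Sp Sn hS]
      have habs := DMaux.gFam_abs D.feas hne Sp Sn
      have hcz : (Sp.card : ℤ) + Sn.card = 1 := by exact_mod_cast hc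
      show |gFam D.feas Sp Sn| ≤ 1
      rw [← hcz]
      exact habs
    · intro Sp Sn Tp Tn hS hT
      rw [hD _ _ hS, hD _ _ hT,
        hD _ _ (hS.mono inter_subset_left inter_subset_left),
        hD _ _ disjoint_sdiff_sdiff]
      exact DMaux.gFam_bisubmod D Sp Sn Tp Tn hS hT
    · intro Sp Sn hS
      rw [hD _ _ hS]
      exact DMaux.gFam_parity D.feas hne Sp Sn
  · rintro ⟨h0, h1, h2, h3⟩
    exact DMaux.backward ⟨h0, h1, h2, h3⟩
end

section
/- A delta-matroid D on [n] is even, i.e., all feasible sets F ∈ 𝓕 have |F| of the same parity, if and only if 2·g_D(S) = g_D((S⁺∪{i}, S⁻)) + g_D((S⁺, S⁻∪{i})) for every admissible set S on [n] with |S| = n−1, where i is the unique element of [n] not in S⁺∪S⁻. -/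
open Finset
open scoped symmDiff

private def fval {n : ℕ} (Sp Sn F : Finset (Fin n)) : ℤ :=
  ((Sp ∩ F).card : ℤ) + ((Sn \ F).card : ℤ) - ((Sn ∩ F).card : ℤ) - ((Sp \ F).card : ℤ)

private lemma gFam_eq {n : ℕ} {G : Finset (Finset (Fin n))} (h : G.Nonempty)
    (Sp Sn : Finset (Fin n)) : gFam G Sp Sn = G.sup' h (fval Sp Sn) := by
  rw [gFam, dif_pos h]; rfl

private lemma fval_insert_left {n : ℕ} {Sp Sn F : Finset (Fin n)} {i : Fin n} (hi : i ∉ Sp) :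
    fval (insert i Sp) Sn F = fval Sp Sn F + (if i ∈ F then 1 else -1) := by
  by_cases hiF : i ∈ F
  · rw [fval, fval, Finset.insert_inter_of_mem hiF, Finset.insert_sdiff_of_mem _ hiF,
      Finset.card_insert_of_notMem (fun hc => hi (Finset.mem_inter.1 hc).1)]
    simp [hiF]; push_cast; ring
  · rw [fval, fval, Finset.insert_inter_of_notMem hiF, Finset.insert_sdiff_of_notMem _ hiF,
      Finset.card_insert_of_notMem (fun hc => hi (Finset.mem_sdiff.1 hc).1)]
    simp [hiF]; push_cast; ring

private lemma fval_insert_right {n : ℕ} {Sp Sn F : Finset (Fin n)} {i : Fin n} (hi : i ∉ Sn) :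
    fval Sp (insert i Sn) F = fval Sp Sn F - (if i ∈ F then 1 else -1) := by
  by_cases hiF : i ∈ F
  · rw [fval, fval, Finset.insert_inter_of_mem hiF, Finset.insert_sdiff_of_mem _ hiF,
      Finset.card_insert_of_notMem (fun hc => hi (Finset.mem_inter.1 hc).1)]
    simp [hiF]; push_cast; ring
  · rw [fval, fval, Finset.insert_inter_of_notMem hiF, Finset.insert_sdiff_of_notMem _ hiF,
      Finset.card_insert_of_notMem (fun hc => hi (Finset.mem_sdiff.1 hc).1)]
    simp [hiF]; push_cast; ring

/-- `fval Sp Sn F = |Sp|+|Sn| - 2(|Sp\F| + |Sn∩F|)`. -/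
private lemma fval_eq {n : ℕ} (Sp Sn F : Finset (Fin n)) :
    fval Sp Sn F = ((Sp.card : ℤ) + Sn.card) - 2 * (((Sp \ F).card : ℤ) + (Sn ∩ F).card) := by
  have h1 := Finset.card_inter_add_card_sdiff Sp F
  have h2 := Finset.card_inter_add_card_sdiff Sn F
  rw [fval]; push_cast; omega

/-- Key counting identity used for the parity argument. -/
private lemma key_count {n : ℕ} {Sp Sn : Finset (Fin n)} {i : Fin n}
    (hdisj : Disjoint Sp Sn) (hunion : Sp ∪ Sn = {i}ᶜ) (F : Finset (Fin n)) :
    (Sp \ F).card + (Sn ∩ F).card + 2 * (Sp ∩ F).card + (if i ∈ F then 1 else 0)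
      = Sp.card + F.card := by
  have h1 := Finset.card_inter_add_card_sdiff Sp F
  have hd : Disjoint (Sn ∩ F) (Sp ∩ F) :=
    (hdisj.symm.mono (Finset.inter_subset_left) (Finset.inter_subset_left))
  have h2 : (Sn ∩ F).card + (Sp ∩ F).card = (F \ {i}).card := by
    rw [← Finset.card_union_of_disjoint hd, ← Finset.union_inter_distrib_right,
      Finset.union_comm Sn Sp, hunion]
    congr 1
    ext a
    simp [Finset.mem_sdiff, and_comm]
  have h3 : (F \ {i}).card + (if i ∈ F then 1 else 0) = F.card := by
    by_cases hiF : i ∈ F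
    · rw [if_pos hiF, Finset.sdiff_singleton_eq_erase, Finset.card_erase_of_mem hiF]
      have := Finset.card_pos.2 ⟨i, hiF⟩; omega
    · rw [if_neg hiF, Finset.sdiff_singleton_eq_erase, Finset.erase_eq_of_notMem hiF]; omega
  omega

/-- If all feasible sets have the same parity, two feasible sets containing/not containing `i`
have `fval` values differing by a nonzero even number; hence their sum is at most `2g - 2`. -/
private lemma fval_add_le {n : ℕ} {Sp Sn F₁ F₂ : Finset (Fin n)} {i : Fin n} {g : ℤ}
    (hdisj : Disjoint Sp Sn) (hunion : Sp ∪ Sn = {i}ᶜ)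
    (hi1 : i ∈ F₁) (hi2 : i ∉ F₂) (hpar : F₁.card % 2 = F₂.card % 2)
    (h1 : fval Sp Sn F₁ ≤ g) (h2 : fval Sp Sn F₂ ≤ g) :
    fval Sp Sn F₁ + fval Sp Sn F₂ + 2 ≤ 2 * g := by
  have k1 := key_count hdisj hunion F₁
  have k2 := key_count hdisj hunion F₂
  rw [if_pos hi1] at k1
  rw [if_neg hi2] at k2
  rw [fval_eq] at h1 h2 ⊢
  rw [fval_eq]
  omega

private lemma cardSD {n : ℕ} (A B : Finset (Fin n)) :
    (A ∆ B).card + 2 * (A ∩ B).card = A.card + B.card := by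
  have h : A ∆ B = (A \ B) ∪ (B \ A) := by
    rw [symmDiff_def]; rfl
  have hd : Disjoint (A \ B) (B \ A) :=
    disjoint_sdiff_sdiff
  rw [h, Finset.card_union_of_disjoint hd]
  have h1 := Finset.card_inter_add_card_sdiff A B
  have h2 := Finset.card_inter_add_card_sdiff B A
  rw [Finset.inter_comm] at h2
  omega

/-- From a pair of feasible sets of different parity, one can find a feasible set `F` and an
element `i ∉ F` with `insert i F` feasible. -/
private lemma exists_step {n : ℕ} (D : DeltaMatroid n) :
    ∀ d : ℕ, ∀ F₁ ∈ D.feas, ∀ F₂ ∈ D.feas, F₁.card % 2 ≠ F₂.card % 2 →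
      (F₁ ∆ F₂).card ≤ d → ∃ F ∈ D.feas, ∃ i, i ∉ F ∧ insert i F ∈ D.feas := by
  intro d
  induction d with
  | zero =>
    intro F₁ h1 F₂ h2 hp hc
    have : F₁ ∆ F₂ = ⊥ := Finset.card_eq_zero.1 (Nat.le_zero.1 hc)
    rw [symmDiff_eq_bot] at this
    exact absurd (this ▸ rfl) hp
  | succ d ih =>
    intro F₁ h1 F₂ h2 hp hc
    have hne : (F₁ ∆ F₂).Nonempty := by
      rw [Finset.nonempty_iff_ne_empty]
      intro h
      rw [show (∅ : Finset (Fin n)) = ⊥ from rfl, symmDiff_eq_bot] at h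
      exact hp (h ▸ rfl)
    obtain ⟨x, hx⟩ := hne
    obtain ⟨y, hy, hF₃⟩ := D.exchange F₁ h1 F₂ h2 x hx
    by_cases hxy : y = x
    · subst hxy
      have hpair : ({y, y} : Finset (Fin n)) = {y} := by simp
      rw [hpair] at hF₃
      by_cases hxF : y ∈ F₁
      · refine ⟨F₁ ∆ {y}, hF₃, y, ?_, ?_⟩
        · simp [Finset.mem_symmDiff, hxF]
        · have : insert y (F₁ ∆ {y}) = F₁ := by
            ext a
            simp only [Finset.mem_insert, Finset.mem_symmDiff, Finset.mem_singleton]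
            constructor
            · rintro (rfl | ⟨h, -⟩ | ⟨rfl, -⟩)
              · exact hxF
              · exact h
              · exact hxF
            · intro ha
              by_cases hay : a = y
              · exact Or.inl hay
              · exact Or.inr (Or.inl ⟨ha, hay⟩)
          rwa [this]
      · refine ⟨F₁, h1, y, hxF, ?_⟩
        have : insert y F₁ = F₁ ∆ {y} := by
          ext a
          simp only [Finset.mem_insert, Finset.mem_symmDiff, Finset.mem_singleton]
          constructor
          · rintro (rfl | h)
            · exact Or.inr ⟨rfl, hxF⟩
            · refine Or.inl ⟨h, ?_⟩; rintro rfl; exact hxF h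
          · rintro (⟨h, _⟩ | ⟨rfl, _⟩) <;> tauto
        rwa [this]
    · -- y ≠ x
      have hxy' : x ≠ y := fun h => hxy h.symm
      have hcard2 : ({x, y} : Finset (Fin n)).card = 2 := Finset.card_pair hxy'
      have hpar3 : (F₁ ∆ {x, y}).card % 2 = F₁.card % 2 := by
        have := cardSD F₁ {x, y}
        omega
      have hsub : ({x, y} : Finset (Fin n)) ⊆ F₁ ∆ F₂ := by
        intro a ha
        rcases Finset.mem_insert.1 ha with rfl | ha
        · exact hx
        · rw [Finset.mem_singleton.1 ha]; exact hy
      have hsd : (F₁ ∆ {x, y}) ∆ F₂ = (F₁ ∆ F₂) ∆ {x, y} := symmDiff_right_comm F₁ {x, y} F₂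
      have hint : (F₁ ∆ F₂) ∩ {x, y} = {x, y} := Finset.inter_eq_right.2 hsub
      have hcd : ((F₁ ∆ {x, y}) ∆ F₂).card ≤ d := by
        have := cardSD (F₁ ∆ F₂) {x, y}
        rw [hint, hcard2] at this
        rw [hsd]
        omega
      exact ih (F₁ ∆ {x, y}) hF₃ F₂ h2 (by omega) hcd

private lemma fval_le_cards {n : ℕ} (Sp Sn F : Finset (Fin n)) :
    fval Sp Sn F ≤ (Sp.card : ℤ) + Sn.card := by
  rw [fval_eq]
  have : (0 : ℤ) ≤ ((Sp \ F).card : ℤ) + (Sn ∩ F).card := by positivity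
  omega

/-- **Theorem (evenness via the rank function).** A delta-matroid `D` on `[n]` is even (all
feasible sets have the same parity of cardinality) if and only if
`2 g_D(S) = g_D(S ∪ {i}) + g_D(S ∪ {ī})` for every admissible `S` of size `n − 1`, where `i`
is the unique element of `[n]` missing from `S`. -/
theorem deltaMatroid_even_iff (n : ℕ) (D : DeltaMatroid n) :
    (∀ F₁ ∈ D.feas, ∀ F₂ ∈ D.feas, F₁.card % 2 = F₂.card % 2) ↔
      (∀ (Sp Sn : Finset (Fin n)) (i : Fin n), Disjoint Sp Sn → i ∉ Sp → i ∉ Sn →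
        Sp.card + Sn.card = n - 1 →
        2 * D.g Sp Sn = D.g (insert i Sp) Sn + D.g Sp (insert i Sn)) := by
  have hne := D.nonempty
  have hg : ∀ Sp Sn : Finset (Fin n), D.g Sp Sn = D.feas.sup' hne (fval Sp Sn) := by
    intro Sp Sn; exact gFam_eq hne Sp Sn
  constructor
  · -- even → identity
    intro hpar Sp Sn i hdisj hip hin hcard
    have hpos : 0 < n := i.pos
    have hunion : Sp ∪ Sn = {i}ᶜ := by
      apply Finset.eq_of_subset_of_card_le
      · intro x hx
        simp only [Finset.mem_compl, Finset.mem_singleton]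
        rintro rfl
        rcases Finset.mem_union.1 hx with h | h
        · exact hip h
        · exact hin h
      · rw [Finset.card_compl, Finset.card_singleton, Fintype.card_fin,
          Finset.card_union_of_disjoint hdisj, hcard]
    rw [hg, hg, hg]
    obtain ⟨F₀, hF₀, hgF₀⟩ := Finset.exists_mem_eq_sup' hne (fval Sp Sn)
    obtain ⟨F₁, hF₁, hA⟩ := Finset.exists_mem_eq_sup' hne (fval (insert i Sp) Sn)
    obtain ⟨F₂, hF₂, hB⟩ := Finset.exists_mem_eq_sup' hne (fval Sp (insert i Sn))
    have le1 : fval (insert i Sp) Sn F₀ ≤ D.feas.sup' hne (fval (insert i Sp) Sn) :=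
      Finset.le_sup' _ hF₀
    have le2 : fval Sp (insert i Sn) F₀ ≤ D.feas.sup' hne (fval Sp (insert i Sn)) :=
      Finset.le_sup' _ hF₀
    have le3 : fval Sp Sn F₁ ≤ D.feas.sup' hne (fval Sp Sn) := Finset.le_sup' _ hF₁
    have le4 : fval Sp Sn F₂ ≤ D.feas.sup' hne (fval Sp Sn) := Finset.le_sup' _ hF₂
    rw [fval_insert_left hip] at le1 hA
    rw [fval_insert_right hin] at le2 hB
    by_cases h1 : i ∈ F₁ <;> by_cases h2 : i ∈ F₂ <;>
      simp only [h1, h2, if_pos, if_neg, if_true, if_false] at le1 le2 hA hB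
    · split_ifs at le1 le2 <;> linarith
    · have := fval_add_le hdisj hunion h1 h2 (hpar F₁ hF₁ F₂ hF₂) le3 le4
      split_ifs at le1 le2 <;> linarith
    · split_ifs at le1 le2 <;> linarith
    · split_ifs at le1 le2 <;> linarith
  · -- identity → even
    intro hid F₁ hF₁ F₂ hF₂
    by_contra hp
    obtain ⟨F, hF, i, hiF, hins⟩ := exists_step D (F₁ ∆ F₂).card F₁ hF₁ F₂ hF₂ hp le_rfl
    have hsub : F ⊆ insert i F := Finset.subset_insert i F
    have hdisj : Disjoint F (insert i F)ᶜ :=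
      disjoint_compl_right.mono_left hsub
    have hin : i ∉ (insert i F)ᶜ := by simp
    have hcard1 : F.card + 1 ≤ n := by
      have := Finset.card_le_univ (insert i F)
      rwa [Finset.card_insert_of_notMem hiF, Fintype.card_fin] at this
    have hcard : F.card + (insert i F)ᶜ.card = n - 1 := by
      rw [Finset.card_compl, Finset.card_insert_of_notMem hiF, Fintype.card_fin]
      omega
    have heq := hid F (insert i F)ᶜ i hdisj hiF hin hcard
    rw [hg, hg, hg] at heq
    set Sn := (insert i F)ᶜ with hSn
    have hdisj2 : Disjoint Sn (insert i F) := disjoint_compl_left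
    -- value of fval at F and insert i F
    have hv1 : fval F Sn (insert i F) = (F.card : ℤ) + Sn.card := by
      rw [fval]
      rw [Finset.inter_eq_left.2 hsub]
      rw [Finset.sdiff_eq_self_of_disjoint hdisj2]
      rw [Finset.disjoint_iff_inter_eq_empty.1 hdisj2] -- maybe wrong name
      rw [Finset.sdiff_eq_empty_iff_subset.2 hsub]
      simp
    have hv2 : fval F Sn F = (F.card : ℤ) + Sn.card := by
      have hd2 : Disjoint Sn F := hdisj2.mono_right hsub
      rw [fval, Finset.inter_self, Finset.sdiff_eq_self_of_disjoint hd2,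
        Finset.disjoint_iff_inter_eq_empty.1 hd2,
        Finset.sdiff_eq_empty_iff_subset.2 (le_refl F)]
      simp
    have bA : (F.card : ℤ) + Sn.card + 1 ≤ D.feas.sup' hne (fval (insert i F) Sn) := by
      have := Finset.le_sup' (fval (insert i F) Sn) hins
      rw [fval_insert_left hiF, if_pos (Finset.mem_insert_self i F), hv1] at this
      linarith
    have bB : (F.card : ℤ) + Sn.card + 1 ≤ D.feas.sup' hne (fval F (insert i Sn)) := by
      have := Finset.le_sup' (fval F (insert i Sn)) hF
      rw [fval_insert_right hin, if_neg hiF, hv2] at this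
      linarith
    have bg : D.feas.sup' hne (fval F Sn) ≤ (F.card : ℤ) + Sn.card := by
      apply Finset.sup'_le
      intro G hG
      exact fval_le_cards F Sn G
    linarith
end

section
/- Let D be a delta-matroid on [n] and let S ⊆ T be admissible sets on [n] (meaning S⁺ ⊆ T⁺ and S⁻ ⊆ T⁻). Let m_S = max_{F∈𝓕} (|S⁺∩F| + |S⁻∖F|) and let 𝓕_S = {F ∈ 𝓕 : |S⁺∩F| + |S⁻∖F| = m_S} be the set of feasible sets achieving this maximum. Then max_{F∈𝓕_S} (|T⁺∩F| + |T⁻∖F|) = max_{F∈𝓕} (|T⁺∩F| + |T⁻∖F|). -/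
open Finset
open scoped symmDiff

namespace DMaux

variable {n : ℕ}

/-- value function -/
def fval (A B F : Finset (Fin n)) : ℕ := (A ∩ F).card + (B \ F).card

lemma symmDiff_singleton_not_mem {F : Finset (Fin n)} {z : Fin n} (h : z ∉ F) :
    F ∆ {z} = insert z F := by
  ext a
  simp only [Finset.mem_symmDiff, mem_singleton, mem_insert]
  by_cases haz : a = z <;> simp [haz, h] <;> tauto

lemma symmDiff_singleton_mem {F : Finset (Fin n)} {z : Fin n} (h : z ∈ F) :
    F ∆ {z} = F.erase z := by
  ext a
  simp only [Finset.mem_symmDiff, mem_singleton, mem_erase]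
  by_cases haz : a = z <;> simp [haz, h] <;> tauto

lemma mem_symmDiff_singleton {F : Finset (Fin n)} {y z : Fin n} (h : y ≠ z) :
    y ∈ F ∆ {z} ↔ y ∈ F := by
  simp [Finset.mem_symmDiff, h]

lemma fval_up {A B F : Finset (Fin n)} {z : Fin n} (hd : Disjoint A B)
    (hz : (z ∈ A ∧ z ∉ F) ∨ (z ∈ B ∧ z ∈ F)) :
    fval A B (F ∆ {z}) = fval A B F + 1 := by
  rcases hz with ⟨hA, hF⟩ | ⟨hB, hF⟩
  · have hB : z ∉ B := disjoint_left.mp hd hA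
    rw [symmDiff_singleton_not_mem hF]
    have h1 : A ∩ insert z F = insert z (A ∩ F) := by
      ext a; by_cases haz : a = z <;> simp [haz, hA, hF] <;> tauto
    have h2 : B \ insert z F = B \ F := by
      ext a; by_cases haz : a = z <;> simp [haz, hB] <;> tauto
    have h3 : z ∉ A ∩ F := by simp [hF]
    unfold fval
    rw [h1, h2, card_insert_of_notMem h3]
    omega
  · have hA : z ∉ A := disjoint_right.mp hd hB
    rw [symmDiff_singleton_mem hF]
    have h1 : A ∩ F.erase z = A ∩ F := by
      ext a; by_cases haz : a = z <;> simp [haz, hA] <;> tauto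
    have h2 : B \ F.erase z = insert z (B \ F) := by
      ext a; by_cases haz : a = z <;> simp [haz, hB, hF] <;> tauto
    have h3 : z ∉ B \ F := by simp [hF]
    unfold fval
    rw [h1, h2, card_insert_of_notMem h3]
    omega

lemma fval_down {A B F : Finset (Fin n)} {z : Fin n} (hd : Disjoint A B)
    (hz : (z ∈ A ∧ z ∈ F) ∨ (z ∈ B ∧ z ∉ F)) :
    fval A B (F ∆ {z}) + 1 = fval A B F := by
  rcases hz with ⟨hA, hF⟩ | ⟨hB, hF⟩
  · have hB : z ∉ B := disjoint_left.mp hd hA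
    rw [symmDiff_singleton_mem hF]
    have h1 : A ∩ F = insert z (A ∩ F.erase z) := by
      ext a; by_cases haz : a = z <;> simp [haz, hA, hF] <;> tauto
    have h2 : B \ F.erase z = B \ F := by
      ext a; by_cases haz : a = z <;> simp [haz, hB] <;> tauto
    have h3 : z ∉ A ∩ F.erase z := by simp
    unfold fval
    rw [h1, h2, card_insert_of_notMem h3]
    omega
  · have hA : z ∉ A := disjoint_right.mp hd hB
    rw [symmDiff_singleton_not_mem hF]
    have h1 : A ∩ insert z F = A ∩ F := by
      ext a; by_cases haz : a = z <;> simp [haz, hA] <;> tauto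
    have h2 : B \ F = insert z (B \ insert z F) := by
      ext a; by_cases haz : a = z <;> simp [haz, hB, hF] <;> tauto
    have h3 : z ∉ B \ insert z F := by simp
    unfold fval
    rw [h1, h2, card_insert_of_notMem h3]
    omega

lemma fval_eq {A B F : Finset (Fin n)} {z : Fin n} (hA : z ∉ A) (hB : z ∉ B) :
    fval A B (F ∆ {z}) = fval A B F := by
  have h1 : A ∩ (F ∆ {z}) = A ∩ F := by
    ext a; by_cases haz : a = z <;>
      simp [haz, hA, Finset.mem_symmDiff] <;> tauto
  have h2 : B \ (F ∆ {z}) = B \ F := by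
    ext a; by_cases haz : a = z <;>
      simp [haz, hB, Finset.mem_symmDiff] <;> tauto
  unfold fval
  rw [h1, h2]

lemma fval_le_of_subsets {A B F G : Finset (Fin n)} (h1 : A ∩ G ⊆ F) (h2 : B ∩ F ⊆ G) :
    fval A B G ≤ fval A B F := by
  have hs1 : A ∩ G ⊆ A ∩ F := fun a ha => by
    simp only [mem_inter] at *
    exact ⟨ha.1, h1 (by simp [ha.1, ha.2])⟩
  have hs2 : B \ G ⊆ B \ F := fun a ha => by
    simp only [mem_sdiff] at *
    refine ⟨ha.1, fun haF => ha.2 (h2 (by simp [ha.1, haF]))⟩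
  exact Nat.add_le_add (card_le_card hs1) (card_le_card hs2)

lemma symmDiff_pair_sdiff {F G : Finset (Fin n)} {x y : Fin n}
    (hx : x ∈ F ∆ G) (hy : y ∈ F ∆ G) :
    (F ∆ {x, y}) ∆ G = (F ∆ G) \ {x, y} := by
  have hx2 : x ∈ F ∧ x ∉ G ∨ x ∈ G ∧ x ∉ F := Finset.mem_symmDiff.mp hx
  have hy2 : y ∈ F ∧ y ∉ G ∨ y ∈ G ∧ y ∉ F := Finset.mem_symmDiff.mp hy
  ext a
  simp only [Finset.mem_symmDiff, mem_sdiff, mem_insert, mem_singleton]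
  by_cases hax : a = x
  · subst hax; tauto
  · by_cases hay : a = y
    · subst hay; tauto
    · simp only [hax, hay, or_self]; tauto

lemma pair_symmDiff {x y : Fin n} (hxy : x ≠ y) :
    ({x} : Finset (Fin n)) ∆ {y} = {x, y} := by
  ext a
  simp only [Finset.mem_symmDiff, mem_singleton, mem_insert]
  constructor
  · rintro (⟨rfl, _⟩ | ⟨rfl, _⟩) <;> tauto
  · rintro (rfl | rfl)
    · exact Or.inl ⟨rfl, hxy⟩
    · exact Or.inr ⟨rfl, fun h => hxy h.symm⟩

lemma claim (D : DeltaMatroid n) (Sp Sn Tp Tn : Finset (Fin n))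
    (hT : Disjoint Tp Tn) (hSp : Sp ⊆ Tp) (hSn : Sn ⊆ Tn)
    (m MT : ℕ) (hmT : ∀ F ∈ D.feas, fval Tp Tn F ≤ MT)
    (G : Finset (Fin n)) (hG : G ∈ D.feas) (hGm : fval Sp Sn G = m) :
    ∀ k : ℕ, ∀ F : Finset (Fin n), F ∈ D.feas → fval Tp Tn F = MT →
      (∀ F' ∈ D.feas, fval Tp Tn F' = MT → fval Sp Sn F' ≤ fval Sp Sn F) →
      (F ∆ G).card ≤ k →
      ∃ F'' ∈ D.feas, m ≤ fval Sp Sn F'' ∧ fval Tp Tn F'' = MT := by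
  have hS : Disjoint Sp Sn := (hT.mono hSp hSn)
  intro k
  induction k with
  | zero =>
    intro F hF hFT _ hcard
    have hFG : F = G := symmDiff_eq_bot.mp (card_eq_zero.mp (Nat.le_zero.mp hcard))
    exact ⟨F, hF, le_of_eq (by rw [hFG, hGm]), hFT⟩
  | succ k ih =>
    intro F hF hFT hmax hcard
    by_cases hle : fval Sp Sn G ≤ fval Sp Sn F
    · exact ⟨F, hF, le_trans (le_of_eq hGm.symm) hle, hFT⟩
    push_neg at hle
    -- find an improving coordinate x
    have hx : ∃ x : Fin n, (x ∈ Sp ∧ x ∈ G ∧ x ∉ F) ∨ (x ∈ Sn ∧ x ∈ F ∧ x ∉ G) := by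
      by_contra hno
      push_neg at hno
      have h1 : Sp ∩ G ⊆ F := by
        intro a ha
        simp only [mem_inter] at ha
        exact (hno a).1 ha.1 ha.2
      have h2 : Sn ∩ F ⊆ G := by
        intro a ha
        simp only [mem_inter] at ha
        exact (hno a).2 ha.1 ha.2
      exact absurd (fval_le_of_subsets h1 h2) (not_le.mpr hle)
    obtain ⟨x, hxc⟩ := hx
    have hxFG : x ∈ F ∆ G := by
      rcases hxc with ⟨_, hG', hF'⟩ | ⟨_, hF', hG'⟩ <;>
        simp [Finset.mem_symmDiff, hG', hF']
    obtain ⟨y, hyFG, hF'feas⟩ := D.exchange F hF G hG x hxFG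
    have hxS : (x ∈ Sp ∧ x ∉ F) ∨ (x ∈ Sn ∧ x ∈ F) := by
      rcases hxc with ⟨h1, _, h3⟩ | ⟨h1, h2, _⟩
      · exact Or.inl ⟨h1, h3⟩
      · exact Or.inr ⟨h1, h2⟩
    have hxT : (x ∈ Tp ∧ x ∉ F) ∨ (x ∈ Tn ∧ x ∈ F) := by
      rcases hxc with ⟨h1, _, h3⟩ | ⟨h1, h2, _⟩
      · exact Or.inl ⟨hSp h1, h3⟩
      · exact Or.inr ⟨hSn h1, h2⟩
    have hF₁S : fval Sp Sn (F ∆ {x}) = fval Sp Sn F + 1 := fval_up hS hxS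
    have hF₁T : fval Tp Tn (F ∆ {x}) = fval Tp Tn F + 1 := fval_up hT hxT
    by_cases hyx : y = x
    · -- single flip strictly improves T value: contradiction with maximality
      subst hyx
      have hpair : ({y, y} : Finset (Fin n)) = {y} := by simp
      rw [hpair] at hF'feas
      have := hmT _ hF'feas
      omega
    -- y ≠ x
    have hxy : x ≠ y := fun h => hyx h.symm
    have hsplit : F ∆ {x, y} = (F ∆ {x}) ∆ {y} := by
      rw [symmDiff_assoc, pair_symmDiff hxy]
    have hF'T_le : fval Tp Tn (F ∆ {x, y}) ≤ MT := hmT _ hF'feas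
    have hyF₁ : y ∈ F ∆ {x} ↔ y ∈ F := mem_symmDiff_singleton hyx
    -- case on y's effect on T
    have hTdown : (y ∈ Tp ∧ y ∈ F ∆ {x}) ∨ (y ∈ Tn ∧ y ∉ F ∆ {x}) := by
      by_contra hcon
      push_neg at hcon
      by_cases hyTp : y ∈ Tp
      · have hyF₁' : y ∉ F ∆ {x} := hcon.1 hyTp
        have : fval Tp Tn (F ∆ {x, y}) = fval Tp Tn (F ∆ {x}) + 1 := by
          rw [hsplit]; exact fval_up hT (Or.inl ⟨hyTp, hyF₁'⟩)
        omega
      by_cases hyTn : y ∈ Tn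
      · have hyF₁' : y ∈ F ∆ {x} := hcon.2 hyTn
        have : fval Tp Tn (F ∆ {x, y}) = fval Tp Tn (F ∆ {x}) + 1 := by
          rw [hsplit]; exact fval_up hT (Or.inr ⟨hyTn, hyF₁'⟩)
        omega
      · have : fval Tp Tn (F ∆ {x, y}) = fval Tp Tn (F ∆ {x}) := by
          rw [hsplit]; exact fval_eq hyTp hyTn
        omega
    have hF'T : fval Tp Tn (F ∆ {x, y}) = MT := by
      have : fval Tp Tn (F ∆ {x, y}) + 1 = fval Tp Tn (F ∆ {x}) := by
        rw [hsplit]; exact fval_down hT hTdown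
      omega
    -- case on y's effect on S
    have hF'S : fval Sp Sn (F ∆ {x, y}) = fval Sp Sn F := by
      have hmaxF' := hmax _ hF'feas hF'T
      rcases hTdown with ⟨hyTp, hyF₁'⟩ | ⟨hyTn, hyF₁'⟩
      · by_cases hySp : y ∈ Sp
        · have : fval Sp Sn (F ∆ {x, y}) + 1 = fval Sp Sn (F ∆ {x}) := by
            rw [hsplit]; exact fval_down hS (Or.inl ⟨hySp, hyF₁'⟩)
          omega
        · have hySn : y ∉ Sn := fun h => (disjoint_left.mp hT hyTp) (hSn h)
          have : fval Sp Sn (F ∆ {x, y}) = fval Sp Sn (F ∆ {x}) := by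
            rw [hsplit]; exact fval_eq hySp hySn
          omega
      · by_cases hySn : y ∈ Sn
        · have : fval Sp Sn (F ∆ {x, y}) + 1 = fval Sp Sn (F ∆ {x}) := by
            rw [hsplit]; exact fval_down hS (Or.inr ⟨hySn, hyF₁'⟩)
          omega
        · have hySp : y ∉ Sp := fun h => (disjoint_right.mp hT hyTn) (hSp h)
          have : fval Sp Sn (F ∆ {x, y}) = fval Sp Sn (F ∆ {x}) := by
            rw [hsplit]; exact fval_eq hySp hySn
          omega
    -- symmetric difference shrinks
    have hsub : ({x, y} : Finset (Fin n)) ⊆ F ∆ G := by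
      intro a ha
      rcases mem_insert.mp ha with rfl | ha'
      · exact hxFG
      · rw [mem_singleton.mp ha']; exact hyFG
    have hFG' : (F ∆ {x, y}) ∆ G = (F ∆ G) \ {x, y} :=
      symmDiff_pair_sdiff hxFG hyFG
    have hcard' : ((F ∆ {x, y}) ∆ G).card ≤ k := by
      rw [hFG', card_sdiff_of_subset hsub, card_pair hxy]
      have hxmem : 0 < (F ∆ G).card := card_pos.mpr ⟨x, hxFG⟩
      omega
    exact ih (F ∆ {x, y}) hF'feas hF'T
      (fun F'' h1 h2 => hF'S ▸ hmax F'' h1 h2) hcard'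

lemma key (D : DeltaMatroid n) (Sp Sn Tp Tn : Finset (Fin n))
    (hT : Disjoint Tp Tn) (hSp : Sp ⊆ Tp) (hSn : Sn ⊆ Tn) :
    ∃ F ∈ D.feas, fval Sp Sn F = D.feas.sup (fval Sp Sn) ∧
      fval Tp Tn F = D.feas.sup (fval Tp Tn) := by
  classical
  obtain ⟨G, hG, hGm⟩ := D.feas.exists_mem_eq_sup D.nonempty (fval Sp Sn)
  obtain ⟨F0, hF0, hF0T⟩ := D.feas.exists_mem_eq_sup D.nonempty (fval Tp Tn)
  have hAne : (D.feas.filter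
      (fun F => fval Tp Tn F = D.feas.sup (fval Tp Tn))).Nonempty :=
    ⟨F0, mem_filter.mpr ⟨hF0, hF0T.symm⟩⟩
  obtain ⟨F, hFA, hFS⟩ := Finset.exists_mem_eq_sup _ hAne (fval Sp Sn)
  have hFfeas : F ∈ D.feas := (mem_filter.mp hFA).1
  have hFT : fval Tp Tn F = D.feas.sup (fval Tp Tn) := (mem_filter.mp hFA).2
  have hmax : ∀ F' ∈ D.feas, fval Tp Tn F' = D.feas.sup (fval Tp Tn) →
      fval Sp Sn F' ≤ fval Sp Sn F := by
    intro F' h1 h2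
    exact hFS ▸ Finset.le_sup (mem_filter.mpr ⟨h1, h2⟩)
  obtain ⟨F'', hF''feas, hF''S, hF''T⟩ :=
    claim D Sp Sn Tp Tn hT hSp hSn (D.feas.sup (fval Sp Sn)) (D.feas.sup (fval Tp Tn))
      (fun F' hF' => Finset.le_sup hF') G hG hGm.symm
      (F ∆ G).card F hFfeas hFT hmax le_rfl
  exact ⟨F'', hF''feas, le_antisymm (Finset.le_sup hF''feas) hF''S, hF''T⟩

end DMaux

/-- **Theorem (greedy property).** Let `S ⊆ T` be admissible sets on `[n]`. Among the feasible
sets maximizing `|S⁺ ∩ F| + |S⁻ \ F|`, the maximum of `|T⁺ ∩ F| + |T⁻ \ F|` is the same as the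
maximum over all feasible sets. -/
theorem deltaMatroid_greedy (n : ℕ) (D : DeltaMatroid n) (Sp Sn Tp Tn : Finset (Fin n))
    (hT : Disjoint Tp Tn) (hSp : Sp ⊆ Tp) (hSn : Sn ⊆ Tn) :
    ((D.feas.filter fun F => (Sp ∩ F).card + (Sn \ F).card
          = D.feas.sup fun F => (Sp ∩ F).card + (Sn \ F).card).sup
        fun F => (Tp ∩ F).card + (Tn \ F).card)
      = D.feas.sup fun F => (Tp ∩ F).card + (Tn \ F).card := by
  classical
  apply le_antisymm
  · exact Finset.sup_mono (filter_subset _ _)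
  · obtain ⟨F, hF, h1, h2⟩ := DMaux.key D Sp Sn Tp Tn hT hSp hSn
    refine le_trans (le_of_eq h2.symm) (Finset.le_sup ?_)
    exact mem_filter.mpr ⟨hF, h1⟩
end

section
/- Let D be a delta-matroid on [n] and let A, B ⊆ [n] be disjoint subsets such that there exists F ∈ 𝓕 with A ⊆ F and F ∩ B = ∅. Let D/A∖B be the delta-matroid on [n]∖(A∪B) with feasible sets {F∖A : F∈𝓕, A⊆F, F∩B=∅} (the result of contracting all elements of A and deleting all elements of B). Then for every admissible set S on [n]∖(A∪B), g_{D/A∖B}(S) = g_D((S⁺∪A, S⁻∪B)) − g_D((A, B)). -/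
open Finset
open scoped symmDiff

namespace MinorAux

variable {n : ℕ}

/-- signed indicator -/
def chiF (F : Finset (Fin n)) (z : Fin n) : ℤ := if z ∈ F then 1 else -1

noncomputable def phiF (P N F : Finset (Fin n)) : ℤ :=
  ((P ∩ F).card : ℤ) + ((N \ F).card : ℤ) - ((N ∩ F).card : ℤ) - ((P \ F).card : ℤ)

lemma sum_chi (P F : Finset (Fin n)) :
    ∑ z ∈ P, chiF F z = ((P ∩ F).card : ℤ) - ((P \ F).card : ℤ) := by
  rw [← Finset.sum_filter_add_sum_filter_not P (· ∈ F) (chiF F)]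
  have h1 : P.filter (· ∈ F) = P ∩ F := Finset.filter_mem_eq_inter
  have h2 : P.filter (fun z => ¬ (z ∈ F)) = P \ F := by
    rw [Finset.sdiff_eq_filter]
  rw [h1, h2]
  have e1 : ∑ z ∈ P ∩ F, chiF F z = ((P ∩ F).card : ℤ) := by
    rw [Finset.sum_congr rfl (fun z hz => ?_), Finset.sum_const, nsmul_eq_mul, mul_one]
    · simp [chiF, (Finset.mem_inter.mp hz).2]
  have e2 : ∑ z ∈ P \ F, chiF F z = -((P \ F).card : ℤ) := by
    rw [Finset.sum_congr rfl (fun z hz => ?_) (g := fun _ => (-1 : ℤ)), Finset.sum_const,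
      nsmul_eq_mul, mul_neg_one]
    · simp [chiF, (Finset.mem_sdiff.mp hz).2]
  rw [e1, e2]; ring

lemma phi_eq_sum (P N F : Finset (Fin n)) :
    phiF P N F = (∑ z ∈ P, chiF F z) - (∑ z ∈ N, chiF F z) := by
  rw [sum_chi, sum_chi, phiF]; ring

lemma phi_add (P₁ P₂ N₁ N₂ F : Finset (Fin n)) (hP : Disjoint P₁ P₂) (hN : Disjoint N₁ N₂) :
    phiF (P₁ ∪ P₂) (N₁ ∪ N₂) F = phiF P₁ N₁ F + phiF P₂ N₂ F := by
  rw [phi_eq_sum, phi_eq_sum, phi_eq_sum, Finset.sum_union hP, Finset.sum_union hN]; ring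

lemma chi_symmDiff (F T : Finset (Fin n)) (z : Fin n) :
    chiF (F ∆ T) z = if z ∈ T then -chiF F z else chiF F z := by
  simp only [chiF, Finset.mem_symmDiff]
  by_cases hF : z ∈ F <;> by_cases hT : z ∈ T <;> simp [hF, hT]

lemma sum_chi_symmDiff (P F T : Finset (Fin n)) :
    ∑ z ∈ P, chiF (F ∆ T) z
      = ∑ z ∈ P, chiF F z - 2 * ∑ z ∈ T, (if z ∈ P then chiF F z else 0) := by
  have : ∀ z ∈ P, chiF (F ∆ T) z = chiF F z - (if z ∈ T then 2 * chiF F z else 0) := by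
    intro z _
    rw [chi_symmDiff]
    split_ifs <;> ring
  rw [Finset.sum_congr rfl this, Finset.sum_sub_distrib, ← Finset.sum_filter,
    Finset.filter_mem_eq_inter, ← Finset.sum_filter, Finset.filter_mem_eq_inter,
    Finset.mul_sum, Finset.inter_comm]

/-- change of `phiF` under flipping a set `T` -/
lemma phi_symmDiff (P N F T : Finset (Fin n)) :
    phiF P N (F ∆ T) = phiF P N F
      - 2 * ∑ z ∈ T, ((if z ∈ P then chiF F z else 0) - (if z ∈ N then chiF F z else 0)) := by
  rw [phi_eq_sum, phi_eq_sum, sum_chi_symmDiff, sum_chi_symmDiff, Finset.sum_sub_distrib]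
  ring

lemma hterm_le (P N F : Finset (Fin n)) (z : Fin n) :
    -1 ≤ (if z ∈ P then chiF F z else 0) - (if z ∈ N then chiF F z else 0) := by
  have : chiF F z = 1 ∨ chiF F z = -1 := by
    unfold chiF; split_ifs <;> simp
  split_ifs <;> rcases this with h | h <;> simp [h]

lemma hterm_le' (P N F : Finset (Fin n)) (z : Fin n) :
    (if z ∈ P then chiF F z else 0) - (if z ∈ N then chiF F z else 0) ≤ 1 := by
  have : chiF F z = 1 ∨ chiF F z = -1 := by
    unfold chiF; split_ifs <;> simp
  split_ifs <;> rcases this with h | h <;> simp [h]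

lemma flip_ge (P N F : Finset (Fin n)) (hPN : Disjoint P N) (x y : Fin n)
    (hx : (x ∈ P ∧ x ∉ F) ∨ (x ∈ N ∧ x ∈ F)) :
    phiF P N F ≤ phiF P N (F ∆ {x, y}) := by
  have hxval : (if x ∈ P then chiF F x else 0) - (if x ∈ N then chiF F x else 0) = -1 := by
    rcases hx with ⟨hxP, hxF⟩ | ⟨hxN, hxF⟩
    · have hxN : x ∉ N := Finset.disjoint_left.mp hPN hxP
      simp [hxP, hxN, chiF, hxF]
    · have hxP : x ∉ P := Finset.disjoint_right.mp hPN hxN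
      simp [hxP, hxN, chiF, hxF]
  rw [phi_symmDiff]
  have hsum : ∑ z ∈ ({x, y} : Finset (Fin n)),
      ((if z ∈ P then chiF F z else 0) - (if z ∈ N then chiF F z else 0)) ≤ 0 := by
    by_cases hxy : x = y
    · subst hxy
      have hpair : ({x, x} : Finset (Fin n)) = {x} := by simp
      rw [hpair, Finset.sum_singleton, hxval]; norm_num
    · rw [Finset.sum_pair hxy, hxval]
      have := hterm_le' P N F y
      linarith
  linarith



lemma phi_sdiff (P N F A : Finset (Fin n)) (hPA : Disjoint P A) (hNA : Disjoint N A) :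
    phiF P N (F \ A) = phiF P N F := by
  have hP := Finset.disjoint_left.mp hPA
  have hN := Finset.disjoint_left.mp hNA
  have e1 : P ∩ (F \ A) = P ∩ F := by
    ext z; simp only [Finset.mem_inter, Finset.mem_sdiff]
    constructor
    · rintro ⟨h1, h2, _⟩; exact ⟨h1, h2⟩
    · rintro ⟨h1, h2⟩; exact ⟨h1, h2, hP h1⟩
  have e2 : N \ (F \ A) = N \ F := by
    ext z; simp only [Finset.mem_sdiff, not_and, not_not]
    constructor
    · rintro ⟨h1, h2⟩; exact ⟨h1, fun hF => absurd (h2 hF) (hN h1)⟩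
    · rintro ⟨h1, h2⟩; exact ⟨h1, fun hF => absurd hF h2⟩
  have e3 : N ∩ (F \ A) = N ∩ F := by
    ext z; simp only [Finset.mem_inter, Finset.mem_sdiff]
    constructor
    · rintro ⟨h1, h2, _⟩; exact ⟨h1, h2⟩
    · rintro ⟨h1, h2⟩; exact ⟨h1, h2, hN h1⟩
  have e4 : P \ (F \ A) = P \ F := by
    ext z; simp only [Finset.mem_sdiff, not_and, not_not]
    constructor
    · rintro ⟨h1, h2⟩; exact ⟨h1, fun hF => absurd (h2 hF) (hP h1)⟩
    · rintro ⟨h1, h2⟩; exact ⟨h1, fun hF => absurd hF h2⟩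
  rw [phiF, phiF, e1, e2, e3, e4]

lemma phi_le_card (P N F : Finset (Fin n)) :
    phiF P N F ≤ (P.card : ℤ) + N.card := by
  have h1 : ((P ∩ F).card : ℤ) ≤ P.card := by
    exact_mod_cast Finset.card_le_card Finset.inter_subset_left
  have h2 : ((N \ F).card : ℤ) ≤ N.card := by
    exact_mod_cast Finset.card_le_card (Finset.sdiff_subset)
  have h3 : (0 : ℤ) ≤ ((N ∩ F).card : ℤ) := Int.natCast_nonneg _
  have h4 : (0 : ℤ) ≤ ((P \ F).card : ℤ) := Int.natCast_nonneg _
  rw [phiF]; linarith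

lemma phi_full (P N F : Finset (Fin n)) (hPF : P ⊆ F) (hFN : Disjoint F N) :
    phiF P N F = (P.card : ℤ) + N.card := by
  have e1 : P ∩ F = P := Finset.inter_eq_left.mpr hPF
  have e2 : N \ F = N := Finset.sdiff_eq_self_iff_disjoint.mpr (hFN.symm)
  have e3 : N ∩ F = ∅ := Finset.disjoint_iff_inter_eq_empty.mp (hFN.symm)
  have e4 : P \ F = ∅ := Finset.sdiff_eq_empty_iff_subset.mpr hPF
  rw [phiF, e1, e2, e3, e4]; simp

lemma gFam_eq {G : Finset (Finset (Fin n))} (h : G.Nonempty) (Sp Sn : Finset (Fin n)) :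
    gFam G Sp Sn = G.sup' h (phiF Sp Sn) := by
  rw [gFam, dif_pos h]; rfl

end MinorAux

/-- **Proposition (rank of minors).** For disjoint `A, B ⊆ [n]` such that some feasible set
contains `A` and avoids `B`, the minor `D/A∖B` (with feasible sets
`{F \ A : F ∈ 𝓕, A ⊆ F, F ∩ B = ∅}`) satisfies
`g_{D/A∖B}(S) = g_D(S ∪ (A, B̄)) − g_D((A, B̄))` for every admissible set `S` on `[n] \ (A ∪ B)`. -/


theorem deltaMatroid_minor_rank (n : ℕ) (D : DeltaMatroid n) (A B : Finset (Fin n))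
    (hAB : Disjoint A B) (hfeas : ∃ F ∈ D.feas, A ⊆ F ∧ Disjoint F B)
    (Sp Sn : Finset (Fin n)) (hS : Disjoint Sp Sn)
    (hSpAB : Disjoint Sp (A ∪ B)) (hSnAB : Disjoint Sn (A ∪ B)) :
    gFam ((D.feas.filter fun F => A ⊆ F ∧ Disjoint F B).image (· \ A)) Sp Sn
      = D.g (Sp ∪ A) (Sn ∪ B) - D.g A B := by
  classical
  obtain ⟨F₀, hF₀feas, hF₀A, hF₀B⟩ := hfeas
  set Fil := D.feas.filter fun F => A ⊆ F ∧ Disjoint F B with hFil_def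
  have hF₀Fil : F₀ ∈ Fil := Finset.mem_filter.mpr ⟨hF₀feas, hF₀A, hF₀B⟩
  have hFilne : Fil.Nonempty := ⟨F₀, hF₀Fil⟩
  have hSpA : Disjoint Sp A := hSpAB.mono_right Finset.subset_union_left
  have hSpB : Disjoint Sp B := hSpAB.mono_right Finset.subset_union_right
  have hSnA : Disjoint Sn A := hSnAB.mono_right Finset.subset_union_left
  have hSnB : Disjoint Sn B := hSnAB.mono_right Finset.subset_union_right
  have hPN : Disjoint (Sp ∪ A) (Sn ∪ B) := by
    rw [Finset.disjoint_union_left, Finset.disjoint_union_right, Finset.disjoint_union_right]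
    exact ⟨⟨hS, hSpB⟩, hSnA.symm, hAB⟩
  -- the combined weight and its max
  set W : Finset (Fin n) → ℤ := fun F => MinorAux.phiF (Sp ∪ A) (Sn ∪ B) F with hW_def
  have hWadd : ∀ F, W F = MinorAux.phiF Sp Sn F + MinorAux.phiF A B F := fun F =>
    MinorAux.phi_add Sp A Sn B F hSpA hSnB
  set m : ℤ := D.feas.sup' D.nonempty W with hm_def
  -- the set of maximizers
  set M : Finset (Finset (Fin n)) := D.feas.filter fun F => m ≤ W F with hM_def
  have hMne : M.Nonempty := by
    obtain ⟨F, hF, hFeq⟩ := Finset.exists_mem_eq_sup' D.nonempty W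
    exact ⟨F, Finset.mem_filter.mpr ⟨hF, le_of_eq hFeq⟩⟩
  obtain ⟨Fm, hFmM, hFmmin⟩ := Finset.exists_min_image M (fun F => (F ∆ F₀).card) hMne
  obtain ⟨hFmfeas, hFmW⟩ := Finset.mem_filter.mp hFmM
  -- the minimal maximizer contains A and avoids B
  have hFmgood : A ⊆ Fm ∧ Disjoint Fm B := by
    by_contra hcon
    have hex : ∃ x, (x ∈ A ∧ x ∉ Fm) ∨ (x ∈ B ∧ x ∈ Fm) := by
      rcases not_and_or.mp hcon with h | h
      · obtain ⟨x, hxA, hxF⟩ := Finset.not_subset.mp h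
        exact ⟨x, Or.inl ⟨hxA, hxF⟩⟩
      · rw [Finset.disjoint_right] at h
        push_neg at h
        obtain ⟨x, hxB, hxF⟩ := h
        exact ⟨x, Or.inr ⟨hxB, hxF⟩⟩
    obtain ⟨x, hx⟩ := hex
    have hxmem : x ∈ Fm ∆ F₀ := by
      rw [Finset.mem_symmDiff]
      rcases hx with ⟨hxA, hxF⟩ | ⟨hxB, hxF⟩
      · exact Or.inr ⟨hF₀A hxA, hxF⟩
      · exact Or.inl ⟨hxF, Finset.disjoint_left.mp hF₀B.symm hxB⟩
    obtain ⟨y, hy, hF'⟩ := D.exchange Fm hFmfeas F₀ hF₀feas x hxmem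
    have hflip : W Fm ≤ W (Fm ∆ {x, y}) := by
      apply MinorAux.flip_ge (Sp ∪ A) (Sn ∪ B) Fm hPN x y
      rcases hx with ⟨hxA, hxF⟩ | ⟨hxB, hxF⟩
      · exact Or.inl ⟨Finset.mem_union_right _ hxA, hxF⟩
      · exact Or.inr ⟨Finset.mem_union_right _ hxB, hxF⟩
    have hF'M : Fm ∆ {x, y} ∈ M :=
      Finset.mem_filter.mpr ⟨hF', le_trans hFmW hflip⟩
    have hxy_sub : ({x, y} : Finset (Fin n)) ⊆ Fm ∆ F₀ := by
      intro z hz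
      rcases Finset.mem_insert.mp hz with rfl | hz
      · exact hxmem
      · rw [Finset.mem_singleton] at hz; subst hz; exact hy
    have hcard : ((Fm ∆ {x, y}) ∆ F₀).card < (Fm ∆ F₀).card := by
      rw [symmDiff_right_comm, symmDiff_of_ge hxy_sub]
      exact Finset.card_lt_card
        (Finset.sdiff_ssubset hxy_sub ⟨x, Finset.mem_insert_self x {y}⟩)
    exact absurd (hFmmin _ hF'M) (not_le.mpr hcard)
  have hFmFil : Fm ∈ Fil := Finset.mem_filter.mpr ⟨hFmfeas, hFmgood⟩
  -- value of m
  have hWm : W Fm = m := le_antisymm (Finset.le_sup' W hFmfeas) hFmW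
  have hphiABFm : MinorAux.phiF A B Fm = (A.card : ℤ) + B.card :=
    MinorAux.phi_full A B Fm hFmgood.1 hFmgood.2
  have hm_val : m = MinorAux.phiF Sp Sn Fm + ((A.card : ℤ) + B.card) := by
    rw [← hWm, hWadd, hphiABFm]
  -- g D A B
  have hgAB : D.g A B = (A.card : ℤ) + B.card := by
    rw [DeltaMatroid.g, MinorAux.gFam_eq D.nonempty]
    apply le_antisymm
    · exact Finset.sup'_le _ _ fun F _ => MinorAux.phi_le_card A B F
    · rw [← MinorAux.phi_full A B F₀ hF₀A hF₀B]
      exact Finset.le_sup' _ hF₀feas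
  -- g D (Sp ∪ A) (Sn ∪ B)
  have hgSAB : D.g (Sp ∪ A) (Sn ∪ B) = m := by
    rw [DeltaMatroid.g, MinorAux.gFam_eq D.nonempty]
  -- LHS
  have hLHS : gFam (Fil.image (· \ A)) Sp Sn = Fil.sup' hFilne (MinorAux.phiF Sp Sn) := by
    have hne : (Fil.image (· \ A)).Nonempty := hFilne.image _
    rw [MinorAux.gFam_eq hne, Finset.sup'_image hne (MinorAux.phiF Sp Sn)]
    apply Finset.sup'_congr _ rfl
    intro F hF
    exact MinorAux.phi_sdiff Sp Sn F A hSpA hSnA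
  rw [hLHS, hgSAB, hgAB]
  apply le_antisymm
  · apply Finset.sup'_le
    intro F hF
    obtain ⟨hFfeas, hFA, hFB⟩ := Finset.mem_filter.mp hF
    have h1 : W F ≤ m := Finset.le_sup' W hFfeas
    have h2 : W F = MinorAux.phiF Sp Sn F + ((A.card : ℤ) + B.card) := by
      rw [hWadd, MinorAux.phi_full A B F hFA hFB]
    linarith
  · have := Finset.le_sup' (MinorAux.phiF Sp Sn) hFmFil
    linarith [hm_val]
end

section
/- Let D be a delta-matroid on [n] and let (P, N) be a partition of [n] into two disjoint sets (encoding a size-n admissible set S). Let r = max_{F∈𝓕}(|P∩F| + |N∖F|) and let ℬ = {(P∩F) ∪ (N∖F) : F ∈ 𝓕, |P∩F| + |N∖F| = r}. Then ℬ is the set of bases of a matroid M on [n], and its rank function satisfies rk_M(T) = (g_D((T∩P, T∩N)) + |T|)/2 for every T ⊆ [n]. -/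
open Finset
open scoped symmDiff

section Aux

variable {n : ℕ}

lemma symmDiff_pair_not_mem {H : Finset (Fin n)} {x y : Fin n}
    (hx : x ∉ H) (hy : y ∉ H) : H ∆ ({x, y} : Finset (Fin n)) = H ∪ {x, y} := by
  apply Disjoint.symmDiff_eq_sup
  simp [Finset.disjoint_insert_right, Finset.disjoint_singleton_right, hx, hy]

lemma symmDiff_pair_mem {H : Finset (Fin n)} {x y : Fin n}
    (hx : x ∉ H) (hy : y ∈ H) : H ∆ ({x, y} : Finset (Fin n)) = insert x (H.erase y) := by
  have hxy : x ≠ y := fun h => hx (h ▸ hy)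
  ext z
  simp only [Finset.mem_symmDiff, mem_insert, mem_singleton, mem_erase]
  rcases eq_or_ne z x with rfl | h1 <;> rcases eq_or_ne z y with rfl | h2 <;> simp_all

lemma card_insert_erase {H : Finset (Fin n)} {x y : Fin n} (hx : x ∉ H) (hy : y ∈ H) :
    (insert x (H.erase y)).card = H.card := by
  have h0 : 0 < H.card := card_pos.2 ⟨y, hy⟩
  rw [card_insert_of_notMem (fun h => hx (mem_of_mem_erase h)), card_erase_of_mem hy]
  omega

/-- strict card drop when removing a pair contained in the symmetric difference -/
lemma card_symmDiff_pair_lt {S : Finset (Fin n)} {x y : Fin n}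
    (hx : x ∈ S) (hy : y ∈ S) : (S ∆ ({x, y} : Finset (Fin n))).card < S.card := by
  have hsub : ({x, y} : Finset (Fin n)) ⊆ S := by
    intro z hz; rcases mem_insert.1 hz with rfl | hz
    · exact hx
    · exact (mem_singleton.1 hz) ▸ hy
  rw [symmDiff_of_ge hsub]
  apply card_lt_card
  exact Finset.sdiff_ssubset hsub ⟨x, mem_insert_self _ _⟩

/-- Key lemma: in a delta-matroid family, the maximum of `|T ∩ ·|` is attained on a
maximum-cardinality feasible set. -/
lemma exists_max_card_max_inter (G : Finset (Finset (Fin n))) (hne : G.Nonempty)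
    (hex : ∀ F₁ ∈ G, ∀ F₂ ∈ G, ∀ x ∈ F₁ ∆ F₂, ∃ y ∈ F₁ ∆ F₂, F₁ ∆ {x, y} ∈ G)
    (T : Finset (Fin n)) :
    ∃ B ∈ G, B.card = G.sup card ∧ (T ∩ B).card = G.sup fun H => (T ∩ H).card := by
  classical
  set r := G.sup card with hr
  set m := (G.sup fun H => (T ∩ H).card) with hm
  set A := G.filter fun H => (T ∩ H).card = m with hA
  have hAne : A.Nonempty := by
    obtain ⟨H, hH, hH2⟩ := Finset.exists_mem_eq_sup G hne fun H => (T ∩ H).card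
    exact ⟨H, mem_filter.2 ⟨hH, hH2.symm⟩⟩
  set c := A.sup card with hc
  set Q := (G ×ˢ G).filter
      (fun p => (T ∩ p.1).card = m ∧ p.1.card = c ∧ p.2.card = r) with hQ
  have hQne : Q.Nonempty := by
    obtain ⟨H, hH, hH2⟩ := Finset.exists_mem_eq_sup A hAne card
    obtain ⟨B, hB, hB2⟩ := Finset.exists_mem_eq_sup G hne card
    have hH' := Finset.mem_filter.1 hH
    exact ⟨(H, B), Finset.mem_filter.2 ⟨Finset.mem_product.2 ⟨hH'.1, hB⟩,
      hH'.2, hH2.symm, hB2.symm⟩⟩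
  obtain ⟨⟨H, B⟩, hpQ, hmin⟩ := Q.exists_min_image (fun p => (p.1 ∆ p.2).card) hQne
  obtain ⟨hmemp, hTH, hHc, hBc⟩ := Finset.mem_filter.1 hpQ
  obtain ⟨hHG, hBG⟩ := Finset.mem_product.1 hmemp
  dsimp only at hTH hHc hBc hHG hBG
  refine ⟨H, hHG, ?_, hTH⟩
  by_contra hne'
  have hHr : H.card < r := lt_of_le_of_ne (Finset.le_sup hHG) hne'
  have hAcard : ∀ H' ∈ G, (T ∩ H').card = m → H'.card ≤ c := fun H' h1 h2 =>
    Finset.le_sup (f := card) (Finset.mem_filter.2 ⟨h1, h2⟩)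
  have hinterle : ∀ H' ∈ G, (T ∩ H').card ≤ m := fun H' h1 =>
    Finset.le_sup (f := fun H => (T ∩ H).card) h1
  have hcardle : ∀ H' ∈ G, H'.card ≤ r := fun H' h1 => Finset.le_sup (f := card) h1
  have hBH : (B \ H).Nonempty := by
    rw [Finset.sdiff_nonempty]
    intro hsub
    have := Finset.card_le_card hsub
    omega
  obtain ⟨x, hxBH⟩ := hBH
  have hxB : x ∈ B := (Finset.mem_sdiff.1 hxBH).1
  have hxH : x ∉ H := (Finset.mem_sdiff.1 hxBH).2
  obtain ⟨y, hy, hH'G⟩ := hex H hHG B hBG x (Finset.mem_symmDiff.2 (Or.inr ⟨hxB, hxH⟩))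
  by_cases hyH : y ∈ H
  · -- y ∈ H \ B
    have hyB : y ∉ B := by
      rcases Finset.mem_symmDiff.1 hy with ⟨_, h⟩ | ⟨_, h⟩
      · exact h
      · exact absurd hyH h
    have hxy : x ≠ y := fun h => hxH (h ▸ hyH)
    have hEq : H ∆ ({x, y} : Finset (Fin n)) = insert x (H.erase y) := symmDiff_pair_mem hxH hyH
    have hxHB : x ∈ H ∆ B := Finset.mem_symmDiff.2 (Or.inr ⟨hxB, hxH⟩)
    have hyHB : y ∈ H ∆ B := Finset.mem_symmDiff.2 (Or.inl ⟨hyH, hyB⟩)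
    by_cases hyT : y ∉ T
    · -- easy swap: T∩H preserved
      have hsub : T ∩ H ⊆ T ∩ (H ∆ {x, y}) := by
        intro z hz
        obtain ⟨hzT, hzH⟩ := mem_inter.1 hz
        have hzy : z ≠ y := fun h => hyT (h ▸ hzT)
        rw [hEq]
        exact mem_inter.2 ⟨hzT, mem_insert.2 (Or.inr (mem_erase.2 ⟨hzy, hzH⟩))⟩
      have h2 : (T ∩ (H ∆ {x, y})).card = m :=
        le_antisymm (hinterle _ hH'G) (hTH ▸ Finset.card_le_card hsub)
      have h3 : (H ∆ {x, y}).card = c := by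
        rw [hEq, card_insert_erase hxH hyH]; exact hHc
      have hlt : ((H ∆ {x, y}) ∆ B).card < (H ∆ B).card := by
        rw [symmDiff_right_comm]
        exact card_symmDiff_pair_lt hxHB hyHB
      have hmem' : (H ∆ {x, y}, B) ∈ Q := Finset.mem_filter.2
        ⟨Finset.mem_product.2 ⟨hH'G, hBG⟩, h2, h3, hBc⟩
      exact absurd (hmin _ hmem') (not_le.2 hlt)
    · push_neg at hyT
      by_cases hxT : x ∈ T
      · -- swap keeping |T ∩ ·|
        have hyTH : y ∈ T ∩ H := mem_inter.2 ⟨hyT, hyH⟩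
        have hxTH : x ∉ T ∩ H := fun h => hxH (mem_of_mem_inter_right h)
        have hsub : insert x ((T ∩ H).erase y) ⊆ T ∩ (H ∆ {x, y}) := by
          rw [hEq]
          intro z hz
          rcases mem_insert.1 hz with rfl | hz
          · exact mem_inter.2 ⟨hxT, mem_insert_self _ _⟩
          · obtain ⟨hzy, hzTH⟩ := mem_erase.1 hz
            obtain ⟨hzT, hzH⟩ := mem_inter.1 hzTH
            exact mem_inter.2 ⟨hzT, mem_insert.2 (Or.inr (mem_erase.2 ⟨hzy, hzH⟩))⟩
        have hcardins : (insert x ((T ∩ H).erase y)).card = m := by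
          rw [card_insert_of_notMem (fun h => hxTH (mem_of_mem_erase h)),
            card_erase_of_mem hyTH]
          have h0 : 0 < (T ∩ H).card := card_pos.2 ⟨y, hyTH⟩
          omega
        have h2 : (T ∩ (H ∆ {x, y})).card = m :=
          le_antisymm (hinterle _ hH'G) (hcardins ▸ Finset.card_le_card hsub)
        have h3 : (H ∆ {x, y}).card = c := by
          rw [hEq, card_insert_erase hxH hyH]; exact hHc
        have hlt : ((H ∆ {x, y}) ∆ B).card < (H ∆ B).card := by
          rw [symmDiff_right_comm]
          exact card_symmDiff_pair_lt hxHB hyHB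
        have hmem' : (H ∆ {x, y}, B) ∈ Q := Finset.mem_filter.2
          ⟨Finset.mem_product.2 ⟨hH'G, hBG⟩, h2, h3, hBc⟩
        exact absurd (hmin _ hmem') (not_le.2 hlt)
      · -- exchange from the B side at y
        obtain ⟨w, hw, hB'G⟩ := hex B hBG H hHG y (Finset.mem_symmDiff.2 (Or.inr ⟨hyH, hyB⟩))
        by_cases hwB : w ∈ B
        · have hwH : w ∉ H := by
            rcases Finset.mem_symmDiff.1 hw with ⟨_, h⟩ | ⟨_, h⟩
            · exact h
            · exact absurd hwB h
          have hEqB : B ∆ ({y, w} : Finset (Fin n)) = insert y (B.erase w) :=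
            symmDiff_pair_mem hyB hwB
          have h3 : (B ∆ {y, w}).card = r := by
            rw [hEqB, card_insert_erase hyB hwB]; exact hBc
          have hwHB : w ∈ H ∆ B := Finset.mem_symmDiff.2 (Or.inr ⟨hwB, hwH⟩)
          have hlt : (H ∆ (B ∆ {y, w})).card < (H ∆ B).card := by
            rw [← symmDiff_assoc]
            exact card_symmDiff_pair_lt hyHB hwHB
          have hmem' : (H, B ∆ {y, w}) ∈ Q := Finset.mem_filter.2
            ⟨Finset.mem_product.2 ⟨hHG, hB'G⟩, hTH, hHc, h3⟩
          exact absurd (hmin _ hmem') (not_le.2 hlt)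
        · have hEqB : B ∆ ({y, w} : Finset (Fin n)) = B ∪ {y, w} :=
            symmDiff_pair_not_mem hyB hwB
          have h1 : B.card < (B ∆ {y, w}).card := by
            apply card_lt_card
            rw [hEqB]
            refine (Finset.ssubset_iff_of_subset Finset.subset_union_left).2
              ⟨y, Finset.mem_union_right _ (mem_insert_self _ _), hyB⟩
          have := hcardle _ hB'G
          omega
  · -- y ∉ H : grow H, contradiction with maximality of card among m-achievers
    have hEq : H ∆ ({x, y} : Finset (Fin n)) = H ∪ {x, y} := symmDiff_pair_not_mem hxH hyH
    have hsub : H ⊆ H ∆ {x, y} := by rw [hEq]; exact Finset.subset_union_left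
    have h2 : (T ∩ (H ∆ {x, y})).card = m := by
      refine le_antisymm (hinterle _ hH'G) ?_
      calc m = (T ∩ H).card := hTH.symm
        _ ≤ _ := Finset.card_le_card (Finset.inter_subset_inter (Finset.Subset.refl T) hsub)
    have h3 : (H ∆ {x, y}).card ≤ c := hAcard _ hH'G h2
    have h4 : H.card < (H ∆ {x, y}).card := by
      apply card_lt_card
      refine (Finset.ssubset_iff_of_subset hsub).2 ⟨x, ?_, hxH⟩
      rw [hEq]; exact Finset.mem_union_right _ (mem_insert_self _ _)
    omega

lemma basis_exchange (G : Finset (Finset (Fin n)))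
    (hex : ∀ F₁ ∈ G, ∀ F₂ ∈ G, ∀ x ∈ F₁ ∆ F₂, ∃ y ∈ F₁ ∆ F₂, F₁ ∆ {x, y} ∈ G)
    {B₁ B₂ : Finset (Fin n)} (h1 : B₁ ∈ G) (h1c : B₁.card = G.sup card)
    (h2 : B₂ ∈ G) (h2c : B₂.card = G.sup card) {x : Fin n} (hx : x ∈ B₂ \ B₁) :
    ∃ y ∈ B₁ \ B₂, insert x (B₁.erase y) ∈ G ∧
      (insert x (B₁.erase y)).card = G.sup card := by
  obtain ⟨hxB₂, hxB₁⟩ := mem_sdiff.1 hx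
  obtain ⟨y, hy, hG⟩ := hex B₁ h1 B₂ h2 x (Finset.mem_symmDiff.2 (Or.inr ⟨hxB₂, hxB₁⟩))
  by_cases hyB₁ : y ∈ B₁
  · have hyB₂ : y ∉ B₂ := by
      rcases Finset.mem_symmDiff.1 hy with ⟨_, h⟩ | ⟨_, h⟩
      · exact h
      · exact absurd hyB₁ h
    refine ⟨y, mem_sdiff.2 ⟨hyB₁, hyB₂⟩, ?_, ?_⟩
    · rwa [symmDiff_pair_mem hxB₁ hyB₁] at hG
    · rw [card_insert_erase hxB₁ hyB₁]; exact h1c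
  · exfalso
    have hEq : B₁ ∆ ({x, y} : Finset (Fin n)) = B₁ ∪ {x, y} :=
      symmDiff_pair_not_mem hxB₁ hyB₁
    have hlt : B₁.card < (B₁ ∆ {x, y}).card := by
      apply card_lt_card
      rw [hEq]
      exact (Finset.ssubset_iff_of_subset Finset.subset_union_left).2
        ⟨x, Finset.mem_union_right _ (mem_insert_self _ _), hxB₁⟩
    have := Finset.le_sup (f := card) hG
    omega

end Aux

/-- **Proposition (the upper matroid and its rank function).** Let `(P, N)` be a partition of
`[n]`, let `r = max_{F ∈ 𝓕} (|P ∩ F| + |N \ F|)`, and let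
`ℬ = {(P ∩ F) ∪ (N \ F) : F ∈ 𝓕, |P ∩ F| + |N \ F| = r}`. Then `ℬ` is the set of bases of a
matroid `M` on `[n]` whose rank function (the maximum size of an intersection with a basis)
satisfies `rk_M(T) = (g_D((T∩P, T∩N)) + |T|)/2` for all `T ⊆ [n]`. -/
theorem deltaMatroid_upper_matroid_rank (n : ℕ) (D : DeltaMatroid n) (P N : Finset (Fin n))
    (hPN : Disjoint P N) (hcover : P ∪ N = univ) :
    ∃ M : Matroid (Fin n), M.E = Set.univ ∧
      (∀ B : Finset (Fin n),
        M.IsBase ↑B ↔ B ∈ (D.feas.filter fun F => (P ∩ F).card + (N \ F).card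
              = D.feas.sup fun F => (P ∩ F).card + (N \ F).card).image
            fun F => (P ∩ F) ∪ (N \ F)) ∧
      (∀ T : Finset (Fin n),
        2 * ((((D.feas.filter fun F => (P ∩ F).card + (N \ F).card
              = D.feas.sup fun F => (P ∩ F).card + (N \ F).card).image
              fun F => (P ∩ F) ∪ (N \ F)).sup fun B => (T ∩ B).card : ℕ) : ℤ)
          = D.g (T ∩ P) (T ∩ N) + T.card) := by
  classical
  have hφ_eq : ∀ F : Finset (Fin n), (P ∩ F) ∪ (N \ F) = F ∆ N := by
    intro F; ext z
    have hz : z ∈ P ∪ N := by rw [hcover]; exact mem_univ z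
    rw [Finset.mem_union] at hz
    have hPN' : ∀ w, w ∈ P → w ∉ N := fun w hw hw2 => (Finset.disjoint_left.1 hPN) hw hw2
    simp only [mem_union, mem_inter, mem_sdiff, Finset.mem_symmDiff]
    rcases hz with h | h
    · have := hPN' z h; tauto
    · have : z ∉ P := fun h2 => hPN' z h2 h; tauto
  have hdisj : ∀ F : Finset (Fin n), Disjoint (P ∩ F) (N \ F) := by
    intro F
    refine Finset.disjoint_left.2 fun z hz hz2 => ?_
    exact (Finset.disjoint_left.1 hPN) (mem_of_mem_inter_left hz) (mem_sdiff.1 hz2).1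
  have hcard_eq : ∀ F : Finset (Fin n), (P ∩ F).card + (N \ F).card = (F ∆ N).card := by
    intro F
    rw [← hφ_eq F]
    exact (Finset.card_union_of_disjoint (hdisj F)).symm
  set G : Finset (Finset (Fin n)) := D.feas.image (· ∆ N) with hG
  have hGne : G.Nonempty := D.nonempty.image _
  set r := G.sup card with hr
  have hsup_eq : (D.feas.sup fun F => (P ∩ F).card + (N \ F).card) = r := by
    rw [hr, hG, Finset.sup_image]
    exact Finset.sup_congr rfl fun F _ => hcard_eq F
  have hBeq : ((D.feas.filter fun F => (P ∩ F).card + (N \ F).card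
        = D.feas.sup fun F => (P ∩ F).card + (N \ F).card).image
        fun F => (P ∩ F) ∪ (N \ F))
      = G.filter fun B => B.card = r := by
    rw [hG, Finset.filter_image]
    have hfil : (D.feas.filter fun F => (P ∩ F).card + (N \ F).card
          = D.feas.sup fun F => (P ∩ F).card + (N \ F).card)
        = D.feas.filter fun F => (F ∆ N).card = r := by
      apply Finset.filter_congr
      intro F _
      rw [hcard_eq F, hsup_eq]
    rw [hfil]
    exact Finset.image_congr fun F _ => hφ_eq F
  have hexG : ∀ F₁ ∈ G, ∀ F₂ ∈ G, ∀ x ∈ F₁ ∆ F₂, ∃ y ∈ F₁ ∆ F₂, F₁ ∆ {x, y} ∈ G := by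
    intro F₁ h1 F₂ h2 x hx
    rw [hG] at h1 h2
    obtain ⟨A, hA, rfl⟩ := Finset.mem_image.1 h1
    obtain ⟨C, hC, rfl⟩ := Finset.mem_image.1 h2
    have hAC : (A ∆ N) ∆ (C ∆ N) = A ∆ C := by
      rw [symmDiff_comm C N, symmDiff_assoc, symmDiff_symmDiff_cancel_left]
    rw [hAC] at hx
    obtain ⟨y, hy, hmem⟩ := D.exchange A hA C hC x hx
    refine ⟨y, by rw [hAC]; exact hy, ?_⟩
    have h5 : (A ∆ N) ∆ ({x, y} : Finset (Fin n)) = (A ∆ {x, y}) ∆ N := by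
      rw [symmDiff_assoc, symmDiff_comm N, ← symmDiff_assoc]
    rw [h5, hG]
    exact Finset.mem_image_of_mem _ hmem
  -- the matroid: dual of the matroid whose bases are complements of ℬ
  set Bse : Set (Fin n) → Prop :=
    fun S => ∃ C : Finset (Fin n), C ∈ G ∧ C.card = r ∧ S = ↑(Cᶜ) with hBse
  have hex_base : ∃ S, Bse S := by
    obtain ⟨C, hC, hC2⟩ := Finset.exists_mem_eq_sup G hGne card
    exact ⟨↑(Cᶜ), C, hC, hC2.symm, rfl⟩
  have hexch : Matroid.ExchangeProperty Bse := by
    rintro X Y ⟨B₁, hB₁G, hB₁c, rfl⟩ ⟨B₂, hB₂G, hB₂c, rfl⟩ a ha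
    obtain ⟨ha1, ha2⟩ := ha
    have haB₁ : a ∉ B₁ := by simpa using ha1
    have haB₂ : a ∈ B₂ := by simpa using ha2
    obtain ⟨y, hy, hins, hinsc⟩ := basis_exchange G hexG hB₁G hB₁c hB₂G hB₂c
        (mem_sdiff.2 ⟨haB₂, haB₁⟩)
    obtain ⟨hyB₁, hyB₂⟩ := mem_sdiff.1 hy
    refine ⟨y, ⟨by simpa using hyB₂, by simpa using hyB₁⟩, ?_⟩
    have hay : a ≠ y := fun h => haB₁ (h ▸ hyB₁)
    have hset : insert y ((↑(B₁ᶜ) : Set (Fin n)) \ {a}) = ↑((insert a (B₁.erase y))ᶜ) := by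
      ext z
      simp only [Set.mem_insert_iff, Set.mem_diff, Finset.coe_compl, Set.mem_compl_iff,
        Finset.mem_coe, Set.mem_singleton_iff, Finset.mem_insert, Finset.mem_erase]
      rcases eq_or_ne z y with rfl | h1 <;> rcases eq_or_ne z a with rfl | h2 <;>
        simp_all
    rw [hset]
    exact ⟨insert a (B₁.erase y), hins, hinsc, rfl⟩
  set M₀ : Matroid (Fin n) := Matroid.ofIsBaseOfFinite Set.finite_univ Bse hex_base hexch
      (fun B _ => Set.subset_univ B) with hM₀
  have hM₀E : M₀.E = Set.univ := rfl
  have hM₀B : M₀.IsBase = Bse := rfl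
  refine ⟨M₀✶, ?_, ?_, ?_⟩
  · rw [Matroid.dual_ground, hM₀E]
  · intro B
    rw [hBeq, Matroid.dual_isBase_iff (by rw [hM₀E]; exact Set.subset_univ _), hM₀B, hM₀E]
    have hcompl : Set.univ \ (↑B : Set (Fin n)) = ↑(Bᶜ) := by
      rw [Finset.coe_compl, Set.compl_eq_univ_diff]
    rw [hcompl]
    constructor
    · rintro ⟨C, hC, hCc, hCeq⟩
      have : Bᶜ = Cᶜ := Finset.coe_injective hCeq
      have hBC : B = C := compl_injective this
      exact Finset.mem_filter.2 ⟨hBC ▸ hC, hBC ▸ hCc⟩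
    · intro h
      obtain ⟨h1, h2⟩ := Finset.mem_filter.1 h
      exact ⟨B, h1, h2, rfl⟩
  · intro T
    rw [hBeq]
    obtain ⟨B₀, hB₀G, hB₀c, hB₀m⟩ := exists_max_card_max_inter G hGne hexG T
    have hsup2 : ((G.filter fun B => B.card = r).sup fun B => (T ∩ B).card)
        = G.sup fun B => (T ∩ B).card :=
      le_antisymm (Finset.sup_mono (Finset.filter_subset _ _))
        (hB₀m ▸ Finset.le_sup (f := fun B => (T ∩ B).card)
          (Finset.mem_filter.2 ⟨hB₀G, hB₀c⟩))
    rw [hsup2]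
    set m := G.sup fun B => (T ∩ B).card with hm
    have hTsplit : ∀ F : Finset (Fin n), T ∩ (F ∆ N) = ((T ∩ P) ∩ F) ∪ ((T ∩ N) \ F) := by
      intro F
      rw [← hφ_eq F, Finset.inter_union_distrib_left, ← Finset.inter_assoc,
        ← Finset.inter_sdiff_assoc]
    have hdisj2 : ∀ F : Finset (Fin n), Disjoint ((T ∩ P) ∩ F) ((T ∩ N) \ F) := by
      intro F
      refine Finset.disjoint_left.2 fun z hz hz2 => ?_
      exact (Finset.disjoint_left.1 hPN)
        (mem_of_mem_inter_right (mem_of_mem_inter_left hz))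
        (mem_of_mem_inter_right (mem_sdiff.1 hz2).1)
    have hTdisj : Disjoint (T ∩ P) (T ∩ N) := by
      refine Finset.disjoint_left.2 fun z hz hz2 => ?_
      exact (Finset.disjoint_left.1 hPN) (mem_of_mem_inter_right hz)
        (mem_of_mem_inter_right hz2)
    have hTcard : (T ∩ P).card + (T ∩ N).card = T.card := by
      rw [← Finset.card_union_of_disjoint hTdisj, ← Finset.inter_union_distrib_left,
        hcover, Finset.inter_univ]
    have hpt : ∀ F : Finset (Fin n),
        (((T ∩ P) ∩ F).card : ℤ) + (((T ∩ N) \ F).card : ℤ)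
          - (((T ∩ N) ∩ F).card : ℤ) - (((T ∩ P) \ F).card : ℤ)
        = 2 * ((T ∩ (F ∆ N)).card : ℤ) - (T.card : ℤ) := by
      intro F
      have h1 : (T ∩ (F ∆ N)).card = ((T ∩ P) ∩ F).card + ((T ∩ N) \ F).card := by
        rw [hTsplit F, Finset.card_union_of_disjoint (hdisj2 F)]
      have h2 := Finset.card_inter_add_card_sdiff (T ∩ P) F
      have h3 := Finset.card_inter_add_card_sdiff (T ∩ N) F
      omega
    simp only [DeltaMatroid.g, gFam]
    rw [dif_pos D.nonempty]
    have hMsup : D.feas.sup' D.nonempty (fun F => (((T ∩ P) ∩ F).card : ℤ)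
          + (((T ∩ N) \ F).card : ℤ) - (((T ∩ N) ∩ F).card : ℤ)
          - (((T ∩ P) \ F).card : ℤ))
        = 2 * (m : ℤ) - (T.card : ℤ) := by
      apply le_antisymm
      · apply Finset.sup'_le
        intro F hF
        rw [hpt F]
        have hle : (T ∩ (F ∆ N)).card ≤ m := by
          rw [hm]
          exact Finset.le_sup (f := fun B => (T ∩ B).card)
            (by rw [hG]; exact Finset.mem_image_of_mem _ hF)
        omega
      · obtain ⟨Bm, hBm, hBmeq⟩ := Finset.exists_mem_eq_sup G hGne fun B => (T ∩ B).card
        rw [hG] at hBm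
        obtain ⟨F, hF, rfl⟩ := Finset.mem_image.1 hBm
        have hle := Finset.le_sup' (f := fun F => (((T ∩ P) ∩ F).card : ℤ)
          + (((T ∩ N) \ F).card : ℤ) - (((T ∩ N) ∩ F).card : ℤ)
          - (((T ∩ P) \ F).card : ℤ)) hF
        rw [hpt F] at hle
        have hBmeq' : m = (T ∩ (F ∆ N)).card := by
          rw [hm, hBmeq]
        omega
    rw [hMsup]
    ring
end
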